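/- arXiv:math/0407456 — 7 statements merged into one kernel-verified Lean document; each statement's English description precedes it below -/
import Mathlib

section
/- In a finite tree, every vertex belonging to the positive vertex-cover backbone (i.e., contained in every minimum vertex cover) has at least two neighbors in the negative backbone (i.e., vertices contained in no minimum vertex cover). -/
variable {V : Type*} [Fintype V] [DecidableEq V]

/-- `C` is a vertex cover of `A`. -/
def IsVC (A : SimpleGraph V) (C : Set V) : Prop :=
  ∀ e ∈ A.edgeSet, ∃ v ∈ C, v ∈ e

/-- `C` is a minimum vertex cover of `A`. -/
def IsMinVC (A : SimpleGraph V) (C : Set V) : Prop :=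
  IsVC A C ∧ ∀ D : Set V, IsVC A D → C.ncard ≤ D.ncard

/-- `M` is a matching of `A`: a set of edges, pairwise non-adjacent. -/
def IsMatch (A : SimpleGraph V) (M : Set (Sym2 V)) : Prop :=
  M ⊆ A.edgeSet ∧ ∀ e ∈ M, ∀ f ∈ M, e ≠ f → ∀ v : V, ¬(v ∈ e ∧ v ∈ f)

/-- `M` is a maximum matching of `A`. -/
def IsMaxMatch (A : SimpleGraph V) (M : Set (Sym2 V)) : Prop :=
  IsMatch A M ∧ ∀ N : Set (Sym2 V), IsMatch A N → N.ncard ≤ M.ncard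

/-- endpoints of a set of edges -/
def Rsupp (R : Set (Sym2 V)) : Set V := {v | ∃ e ∈ R, v ∈ e}

/-- the tricoloring conditions (iii) of the paper -/
def IsBColoring (A : SimpleGraph V) (B : Set V) (R : Set (Sym2 V)) (G : Set V) : Prop :=
  R ⊆ A.edgeSet ∧
  B ∪ G ∪ Rsupp R = Set.univ ∧
  Disjoint B G ∧ Disjoint B (Rsupp R) ∧ Disjoint G (Rsupp R) ∧
  (∀ e ∈ R, ∀ f ∈ R, e ≠ f → ∀ v : V, ¬(v ∈ e ∧ v ∈ f)) ∧
  (∀ v w : V, A.Adj v w → v ∈ G → w ∈ B) ∧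
  (∀ b ∈ B, 2 ≤ (A.neighborSet b ∩ G).ncard)

/-- positive vertex-cover backbone -/
def PosBB (A : SimpleGraph V) : Set V := {v | ∀ C : Set V, IsMinVC A C → v ∈ C}

/-- negative vertex-cover backbone -/
def NegBB (A : SimpleGraph V) : Set V := {v | ∀ C : Set V, IsMinVC A C → v ∉ C}

/-- degenerate vertex -/
def Degen (A : SimpleGraph V) (v : V) : Prop :=
  (∃ C : Set V, IsMinVC A C ∧ v ∈ C) ∧ (∃ C : Set V, IsMinVC A C ∧ v ∉ C)

/-- exclusive edge -/
def Exclusive (A : SimpleGraph V) (e : Sym2 V) : Prop :=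
  e ∈ A.edgeSet ∧ (∀ v ∈ e, Degen A v) ∧
  ∀ C : Set V, IsMinVC A C → ∃ v ∈ e, v ∉ C

set_option linter.unusedVariables false
set_option linter.unusedSectionVars false

namespace TreeVCAux

open SimpleGraph

def pruned (A : SimpleGraph V) (v : V) : SimpleGraph V where
  Adj a b := A.Adj a b ∧ a ≠ v ∧ b ≠ v
  symm := ⟨fun a b ⟨h, ha, hb⟩ => ⟨h.symm, hb, ha⟩⟩
  loopless := ⟨fun a ⟨h, _, _⟩ => A.loopless.irrefl a h⟩

lemma pruned_adj {A : SimpleGraph V} {v a b : V} :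
    (pruned A v).Adj a b ↔ A.Adj a b ∧ a ≠ v ∧ b ≠ v := Iff.rfl

def S (A : SimpleGraph V) (v w : V) : Set V := {u | (pruned A v).Reachable w u}

lemma pruned_le (A : SimpleGraph V) (v : V) : pruned A v ≤ A := fun _ _ h => h.1

lemma pruned_walk_support {A : SimpleGraph V} {v : V} :
    ∀ {a b : V} (p : (pruned A v).Walk a b), a ≠ v → v ∉ p.support
  | _, _, SimpleGraph.Walk.nil, ha => by simp [Ne.symm ha]
  | _, _, SimpleGraph.Walk.cons h p, ha => by
    rw [SimpleGraph.Walk.support_cons]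
    simp only [List.mem_cons, not_or]
    exact ⟨Ne.symm ha, pruned_walk_support p h.2.2⟩

lemma walk_to_pruned {A : SimpleGraph V} {v : V} :
    ∀ {a b : V} (p : A.Walk a b), v ∉ p.support → (pruned A v).Reachable a b
  | a, _, SimpleGraph.Walk.nil, _ => SimpleGraph.Reachable.refl a
  | _, _, @SimpleGraph.Walk.cons _ _ a c _ h p, hp => by
    rw [SimpleGraph.Walk.support_cons] at hp
    simp only [List.mem_cons, not_or] at hp
    have hc : c ≠ v := fun h' => hp.2 (h' ▸ p.start_mem_support)
    exact (SimpleGraph.Adj.reachable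
      (pruned_adj.mpr ⟨h, Ne.symm hp.1, hc⟩)).trans (walk_to_pruned p hp.2)

lemma mem_S_self {A : SimpleGraph V} {v w : V} : w ∈ S A v w := SimpleGraph.Reachable.refl w

lemma not_v_mem_S {A : SimpleGraph V} {v w : V} (hvw : A.Adj v w) : v ∉ S A v w := by
  intro h
  obtain ⟨p⟩ := h
  exact pruned_walk_support p hvw.ne' p.end_mem_support

lemma S_adj_closed {A : SimpleGraph V} {v w u x : V} (hu : u ∈ S A v w)
    (hux : A.Adj u x) (hu' : u ≠ v) (hx' : x ≠ v) : x ∈ S A v w :=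
  hu.trans (SimpleGraph.Adj.reachable (pruned_adj.mpr ⟨hux, hu', hx'⟩))

lemma S_disjoint {A : SimpleGraph V} (hA : A.IsTree) {v w w' : V}
    (hvw : A.Adj v w) (hvw' : A.Adj v w') (hne : w ≠ w') :
    Disjoint (S A v w) (S A v w') := by
  rw [Set.disjoint_left]
  intro u hu hu'
  obtain ⟨p⟩ := hu.trans hu'.symm
  have hvp : v ∉ p.support := pruned_walk_support p hvw.ne'
  have hsub : ∀ e ∈ p.edges, e ∈ A.edgeSet := fun e he =>
    SimpleGraph.edgeSet_mono (pruned_le A v) (p.edges_subset_edgeSet he)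
  set q := (p.transfer A hsub).toPath with hq
  have hvq : v ∉ (q : A.Walk w w').support := by
    intro h
    exact hvp (by
      have := SimpleGraph.Walk.support_toPath_subset (p.transfer A hsub) h
      rwa [SimpleGraph.Walk.support_transfer] at this)
  set r : A.Walk w w' := SimpleGraph.Walk.cons hvw.symm
      (SimpleGraph.Walk.cons hvw' SimpleGraph.Walk.nil) with hr
  have hrp : r.IsPath := by
    rw [SimpleGraph.Walk.isPath_def, hr]
    simp [hvw.ne', hne, hvw'.ne]
  have : (q : A.Walk w w') = r := (hA.existsUnique_path w w').unique q.2 hrp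
  rw [this, hr] at hvq
  simp at hvq

lemma cover_elt {A : SimpleGraph V} {X : Set V} (hX : IsVC A X) {a b : V}
    (he : A.Adj a b) : ∃ x ∈ X, x = a ∨ x = b := by
  obtain ⟨x, hx, hxe⟩ := hX _ (A.mem_edgeSet.mpr he)
  exact ⟨x, hx, Sym2.mem_iff.mp hxe⟩

lemma mem_edge_of_eq {a b x : V} (h : x = a ∨ x = b) : x ∈ s(a, b) := Sym2.mem_iff.mpr h

lemma comb {A : SimpleGraph V} {v w : V} (hvw : A.Adj v w)
    {C E : Set V} (hC : IsVC A C) (hE : IsVC A E) (hvE : v ∈ E) :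
    IsVC A ((E \ S A v w) ∪ (C ∩ S A v w)) := by
  intro e he
  induction e using Sym2.ind with
  | _ a b =>
  have hab : A.Adj a b := (A.mem_edgeSet).mp he
  by_cases hva : a = v
  · exact ⟨v, Or.inl ⟨hvE, not_v_mem_S hvw⟩, mem_edge_of_eq (Or.inl hva.symm)⟩
  by_cases hvb : b = v
  · exact ⟨v, Or.inl ⟨hvE, not_v_mem_S hvw⟩, mem_edge_of_eq (Or.inr hvb.symm)⟩
  by_cases ha : a ∈ S A v w
  · have hb : b ∈ S A v w := S_adj_closed ha hab hva hvb
    obtain ⟨x, hxC, hxe⟩ := cover_elt hC hab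
    have hxS : x ∈ S A v w := by rcases hxe with h | h <;> rw [h] <;> assumption
    exact ⟨x, Or.inr ⟨hxC, hxS⟩, mem_edge_of_eq hxe⟩
  · have hb : b ∉ S A v w := fun hb => ha (S_adj_closed hb hab.symm hvb hva)
    obtain ⟨x, hxE, hxe⟩ := cover_elt hE hab
    have hxS : x ∉ S A v w := by rcases hxe with h | h <;> rw [h] <;> assumption
    exact ⟨x, Or.inl ⟨hxE, hxS⟩, mem_edge_of_eq hxe⟩

lemma exists_minVC (A : SimpleGraph V) : ∃ C : Set V, IsMinVC A C := by
  have huniv : IsVC A Set.univ := by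
    intro e _
    induction e using Sym2.ind with
    | _ a b => exact ⟨a, Set.mem_univ a, mem_edge_of_eq (Or.inl rfl)⟩
  have hne : ∃ n, ∃ C : Set V, IsVC A C ∧ C.ncard = n := ⟨_, Set.univ, huniv, rfl⟩
  obtain ⟨C, hC, hcard⟩ := Nat.sInf_mem hne
  exact ⟨C, hC, fun D hD => hcard ▸ Nat.sInf_le ⟨D, hD, rfl⟩⟩

lemma exchange {A : SimpleGraph V} {v w : V} (hvw : A.Adj v w)
    {E Cw : Set V} (hE : IsMinVC A E) (hvE : v ∈ E) (hCw : IsMinVC A Cw) (hvCw : v ∈ Cw) :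
    IsMinVC A ((E \ S A v w) ∪ (Cw ∩ S A v w)) := by
  have h1 : IsVC A ((Cw \ S A v w) ∪ (E ∩ S A v w)) := comb hvw hE.1 hCw.1 hvCw
  have h2 : IsVC A ((E \ S A v w) ∪ (Cw ∩ S A v w)) := comb hvw hCw.1 hE.1 hvE
  have e1 : Cw.ncard ≤ (Cw \ S A v w).ncard + (E ∩ S A v w).ncard :=
    (hCw.2 _ h1).trans (Set.ncard_union_le _ _)
  have e2 : (Cw ∩ S A v w).ncard + (Cw \ S A v w).ncard = Cw.ncard :=
    Set.ncard_inter_add_ncard_diff_eq_ncard Cw _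
  have e3 : (E ∩ S A v w).ncard + (E \ S A v w).ncard = E.ncard :=
    Set.ncard_inter_add_ncard_diff_eq_ncard E _
  refine ⟨h2, fun D hD => ?_⟩
  have h4 : ((E \ S A v w) ∪ (Cw ∩ S A v w)).ncard ≤
      (E \ S A v w).ncard + (Cw ∩ S A v w).ncard := Set.ncard_union_le _ _
  have h5 := hE.2 D hD
  omega

lemma extend {A : SimpleGraph V} {v : V} (hv : v ∈ PosBB A) (hA : A.IsTree) :
    ∀ T : Finset V, (∀ w ∈ T, A.Adj v w ∧ ∃ C, IsMinVC A C ∧ w ∈ C) →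
      ∃ E, IsMinVC A E ∧ v ∈ E ∧ ∀ w ∈ T, w ∈ E := by
  intro T
  induction T using Finset.induction_on with
  | empty =>
    intro _
    obtain ⟨C, hC⟩ := exists_minVC A
    exact ⟨C, hC, hv C hC, by simp⟩
  | @insert a T' ha ih =>
    intro hT
    obtain ⟨E, hE, hvE, hTE⟩ := ih (fun w hw => hT w (Finset.mem_insert_of_mem hw))
    obtain ⟨hadj, Cw, hCw, hwCw⟩ := hT a (Finset.mem_insert_self _ _)
    have hmin := exchange hadj hE hvE hCw (hv Cw hCw)
    refine ⟨_, hmin, Or.inl ⟨hvE, not_v_mem_S hadj⟩, ?_⟩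
    intro x hx
    rcases Finset.mem_insert.mp hx with h | hx
    · subst h
      exact Or.inr ⟨hwCw, mem_S_self⟩
    · have hxadj := (hT x (Finset.mem_insert_of_mem hx)).1
      have hxa : x ≠ a := fun h => ha (h ▸ hx)
      have hxS : x ∉ S A v a :=
        fun hmem => Set.disjoint_left.mp (S_disjoint hA hxadj hadj hxa) mem_S_self hmem
      exact Or.inl ⟨hTE x hx, hxS⟩

end TreeVCAux

open TreeVCAux in
theorem posBB_two_neighbors_in_negBB (A : SimpleGraph V) (hA : A.IsTree)
    (v : V) (hv : v ∈ PosBB A) :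
    2 ≤ (A.neighborSet v ∩ NegBB A).ncard := by
  by_contra hlt
  push_neg at hlt
  have hBad1 : (A.neighborSet v ∩ NegBB A).ncard ≤ 1 := by omega
  let T : Finset V := (Set.toFinite (A.neighborSet v \ NegBB A)).toFinset
  have hTspec : ∀ w ∈ T, A.Adj v w ∧ ∃ C, IsMinVC A C ∧ w ∈ C := by
    intro w hw
    rw [Set.Finite.mem_toFinset] at hw
    obtain ⟨hw1, hw2⟩ := hw
    refine ⟨hw1, ?_⟩
    by_contra hno
    push_neg at hno
    exact hw2 (fun C hC hwC => hno C hC hwC)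
  obtain ⟨E, hE, hvE, hTE⟩ := extend hv hA T hTspec
  have hgoodE : ∀ w, A.Adj v w → w ∉ NegBB A → w ∈ E := by
    intro w h1 h2
    exact hTE w (by rw [Set.Finite.mem_toFinset]; exact ⟨h1, h2⟩)
  have hcard : (E \ {v}).ncard + 1 = E.ncard := by
    have := Set.ncard_diff_add_ncard_of_subset (Set.singleton_subset_iff.mpr hvE)
        (Set.toFinite E)
    simpa using this
  rcases Set.ncard_le_one_iff_eq (Set.toFinite _) |>.mp hBad1 with hempty | ⟨x0, hx0⟩
  · -- no bad neighbor: E \ {v} is a VC, contradicting minimality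
    have hD : IsVC A (E \ {v}) := by
      intro e he
      induction e using Sym2.ind with
      | _ a b =>
      have hab : A.Adj a b := (A.mem_edgeSet).mp he
      obtain ⟨x, hxE, hxe⟩ := cover_elt hE.1 hab
      by_cases hxv : x = v
      · have hor : (v = a ∨ v = b) := hxv ▸ hxe
        rcases hor with h | h
        · have hvb : A.Adj v b := h ▸ hab
          have hb : b ∉ NegBB A := fun hb =>
            (Set.eq_empty_iff_forall_notMem.mp hempty b) ⟨hvb, hb⟩
          exact ⟨b, ⟨hgoodE b hvb hb, hvb.ne'⟩, mem_edge_of_eq (Or.inr rfl)⟩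
        · have hva : A.Adj v a := h ▸ hab.symm
          have ha : a ∉ NegBB A := fun ha' =>
            (Set.eq_empty_iff_forall_notMem.mp hempty a) ⟨hva, ha'⟩
          exact ⟨a, ⟨hgoodE a hva ha, hva.ne'⟩, mem_edge_of_eq (Or.inl rfl)⟩
      · exact ⟨x, ⟨hxE, hxv⟩, mem_edge_of_eq hxe⟩
    have := hE.2 _ hD
    omega
  · -- one bad neighbor x0
    have hx0mem : x0 ∈ A.neighborSet v ∩ NegBB A := by rw [hx0]; exact rfl
    have hx0adj : A.Adj v x0 := hx0mem.1
    have hD : IsVC A ((E \ {v}) ∪ {x0}) := by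
      intro e he
      induction e using Sym2.ind with
      | _ a b =>
      have hab : A.Adj a b := (A.mem_edgeSet).mp he
      obtain ⟨x, hxE, hxe⟩ := cover_elt hE.1 hab
      by_cases hxv : x = v
      · have hor : (v = a ∨ v = b) := hxv ▸ hxe
        rcases hor with h | h
        · have hvb : A.Adj v b := h ▸ hab
          by_cases hb : b ∈ NegBB A
          · have hbx0 : b ∈ ({x0} : Set V) := by rw [← hx0]; exact ⟨hvb, hb⟩
            exact ⟨b, Or.inr hbx0, mem_edge_of_eq (Or.inr rfl)⟩
          · exact ⟨b, Or.inl ⟨hgoodE b hvb hb, hvb.ne'⟩, mem_edge_of_eq (Or.inr rfl)⟩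
        · have hva : A.Adj v a := h ▸ hab.symm
          by_cases ha' : a ∈ NegBB A
          · have hax0 : a ∈ ({x0} : Set V) := by rw [← hx0]; exact ⟨hva, ha'⟩
            exact ⟨a, Or.inr hax0, mem_edge_of_eq (Or.inl rfl)⟩
          · exact ⟨a, Or.inl ⟨hgoodE a hva ha', hva.ne'⟩, mem_edge_of_eq (Or.inl rfl)⟩
      · exact ⟨x, Or.inl ⟨hxE, hxv⟩, mem_edge_of_eq hxe⟩
    have hDcard : ((E \ {v}) ∪ {x0}).ncard ≤ E.ncard := by
      have h1 : ((E \ {v}) ∪ {x0}).ncard ≤ (E \ {v}).ncard + ({x0} : Set V).ncard :=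
        Set.ncard_union_le _ _
      rw [Set.ncard_singleton] at h1
      omega
    have hDmin : IsMinVC A ((E \ {v}) ∪ {x0}) :=
      ⟨hD, fun D' hD' => hDcard.trans (hE.2 D' hD')⟩
    rcases hv _ hDmin with h | h
    · exact h.2 rfl
    · exact hx0adj.ne (Set.mem_singleton_iff.mp h)
end

section
/- In a finite tree, every degenerate vertex (one contained in some but not all minimum vertex covers) is an endpoint of exactly one exclusive edge, where an edge is exclusive if both endpoints are degenerate and no minimum vertex cover contains both of its endpoints. Consequently, the exclusive edges form a matching on the set of degenerate vertices. -/
variable {V : Type*} [Fintype V] [DecidableEq V]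

/-- delete all edges at `p` -/
def er (A : SimpleGraph V) (p : V) : SimpleGraph V where
  Adj x y := A.Adj x y ∧ x ≠ p ∧ y ≠ p
  symm := ⟨fun x y ⟨h, hx, hy⟩ => ⟨h.symm, hy, hx⟩⟩
  loopless := ⟨fun x ⟨h, _, _⟩ => A.loopless.irrefl x h⟩

lemma er_le (A : SimpleGraph V) (p : V) : er A p ≤ A := fun _ _ h => h.1

lemma er_edgeSet {A : SimpleGraph V} {p : V} {e : Sym2 V} :
    e ∈ (er A p).edgeSet ↔ e ∈ A.edgeSet ∧ p ∉ e := by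
  induction e using Sym2.ind with
  | _ x y =>
    simp only [SimpleGraph.mem_edgeSet, Sym2.mem_iff]
    constructor
    · rintro ⟨h, hx, hy⟩; exact ⟨h, by rintro (rfl|rfl) <;> simp_all⟩
    · rintro ⟨h, hp⟩
      exact ⟨h, fun hx => hp (Or.inl hx.symm), fun hy => hp (Or.inr hy.symm)⟩

lemma exists_minVC (A : SimpleGraph V) : ∃ C, IsMinVC A C := by
  have hne : {n | ∃ C : Set V, IsVC A C ∧ C.ncard = n}.Nonempty :=
    ⟨(Set.univ : Set V).ncard, Set.univ, fun e _ => by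
      induction e using Sym2.ind with
      | _ x y => exact ⟨x, Set.mem_univ x, by simp⟩, rfl⟩
  obtain ⟨C, hC, hcard⟩ := Nat.sInf_mem hne
  exact ⟨C, hC, fun D hD => by
    rw [hcard]; exact Nat.sInf_le ⟨D, hD, rfl⟩⟩

lemma exists_leaf (A : SimpleGraph V) (hac : A.IsAcyclic) (hne : A.edgeSet.Nonempty) :
    ∃ l p : V, A.Adj l p ∧ ∀ y, A.Adj l y → y = p := by
  classical
  set S : Set ℕ := {n | ∃ u v : V, ∃ w : A.Walk u v, w.IsPath ∧ w.length = n} with hS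
  obtain ⟨e, he⟩ := hne
  induction e using Sym2.ind with
  | _ a b =>
  rw [SimpleGraph.mem_edgeSet] at he
  have h1 : (1 : ℕ) ∈ S := ⟨a, b, SimpleGraph.Walk.cons he SimpleGraph.Walk.nil,
    by simp [SimpleGraph.Walk.cons_isPath_iff, he.ne], rfl⟩
  have hbdd : BddAbove S := by
    refine ⟨Fintype.card V, fun n hn => ?_⟩
    obtain ⟨u, v, w, hw, rfl⟩ := hn
    exact hw.length_lt.le
  have hmem : sSup S ∈ S := Nat.sSup_mem ⟨1, h1⟩ hbdd
  obtain ⟨u, v, w, hw, hlen⟩ := hmem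
  cases w with
  | nil =>
    exfalso
    have : (1 : ℕ) ≤ sSup S := le_csSup hbdd h1
    simp at hlen
    omega
  | @cons _ x _ h q =>
    refine ⟨u, x, h, fun y hy => ?_⟩
    by_contra hyx
    have hyu : y ≠ u := fun hh => A.loopless.irrefl u (hh ▸ hy)
    by_cases hsup : y ∈ (SimpleGraph.Walk.cons h q).support
    · -- build a cycle
      have ht : ((SimpleGraph.Walk.cons h q).takeUntil y hsup).IsPath := hw.takeUntil hsup
      have hcyc : (SimpleGraph.Walk.cons hy.symm
          ((SimpleGraph.Walk.cons h q).takeUntil y hsup)).IsCycle := by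
        rw [SimpleGraph.Walk.cons_isCycle_iff]
        refine ⟨ht, fun hedge => ?_⟩
        have hedge' : s(y, u) ∈ (SimpleGraph.Walk.cons h q).edges :=
          SimpleGraph.Walk.edges_takeUntil_subset _ hsup hedge
        rw [SimpleGraph.Walk.edges_cons, List.mem_cons] at hedge'
        rcases hedge' with heq | hmem'
        · rw [Sym2.eq_iff] at heq
          rcases heq with ⟨rfl, _⟩ | ⟨rfl, _⟩
          · exact hyu rfl
          · exact hyx rfl
        · have : u ∈ q.support := SimpleGraph.Walk.snd_mem_support_of_mem_edges q hmem'
          rw [SimpleGraph.Walk.cons_isPath_iff] at hw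
          exact hw.2 this
      exact hac _ hcyc
    · -- extend the path
      have hpath : (SimpleGraph.Walk.cons hy.symm (SimpleGraph.Walk.cons h q)).IsPath := by
        rw [SimpleGraph.Walk.cons_isPath_iff]; exact ⟨hw, hsup⟩
      have : (SimpleGraph.Walk.cons h q).length + 1 ∈ S := ⟨y, v, _, hpath, rfl⟩
      have hle : (SimpleGraph.Walk.cons h q).length + 1 ≤ sSup S := le_csSup hbdd this
      omega

section Leaf
variable {A : SimpleGraph V} {l p : V}

lemma edge_at_l (hlp : A.Adj l p) (hleaf : ∀ y, A.Adj l y → y = p) :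
    ∀ e ∈ A.edgeSet, l ∈ e → e = s(l, p) := by
  intro e
  induction e using Sym2.ind with
  | _ x y =>
    intro he hl
    rw [SimpleGraph.mem_edgeSet] at he
    rw [Sym2.mem_iff] at hl
    rcases hl with rfl | rfl
    · rw [hleaf y he]
    · rw [hleaf x he.symm, Sym2.eq_swap]

lemma er_edge_avoids (hlp : A.Adj l p) (hleaf : ∀ y, A.Adj l y → y = p) :
    ∀ e ∈ (er A p).edgeSet, p ∉ e ∧ l ∉ e := by
  intro e he
  rw [er_edgeSet] at he
  refine ⟨he.2, fun hl => ?_⟩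
  have := edge_at_l hlp hleaf e he.1 hl
  exact he.2 (this ▸ Sym2.mem_mk_right l p)

lemma cover_lp (hlp : A.Adj l p) {C : Set V} (hC : IsVC A C) : l ∈ C ∨ p ∈ C := by
  obtain ⟨v, hv, hve⟩ := hC s(l, p) ((SimpleGraph.mem_edgeSet A).2 hlp)
  rw [Sym2.mem_iff] at hve
  rcases hve with rfl | rfl
  · exact Or.inl hv
  · exact Or.inr hv

lemma not_both (hlp : A.Adj l p) (hleaf : ∀ y, A.Adj l y → y = p)
    {C : Set V} (hC : IsMinVC A C) : ¬(l ∈ C ∧ p ∈ C) := by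
  rintro ⟨hl, hp⟩
  have hvc : IsVC A (C \ {l}) := by
    intro e he
    obtain ⟨v, hv, hve⟩ := hC.1 e he
    by_cases hvl : v = l
    · have hE := edge_at_l hlp hleaf e he (hvl ▸ hve)
      exact ⟨p, ⟨hp, fun hh => hlp.ne' (Set.mem_singleton_iff.1 hh)⟩,
        hE ▸ Sym2.mem_mk_right l p⟩
    · exact ⟨v, ⟨hv, hvl⟩, hve⟩
  have h1 := hC.2 _ hvc
  have h2 : (C \ {l}).ncard + 1 = C.ncard := Set.ncard_diff_singleton_add_one hl
  omega

lemma vc_er_of_vc (hlp : A.Adj l p) (hleaf : ∀ y, A.Adj l y → y = p)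
    {C : Set V} (hC : IsVC A C) {x : V} (hx : x = l ∨ x = p) :
    IsVC (er A p) (C \ {x}) := by
  intro e he
  have havoid := er_edge_avoids hlp hleaf e he
  obtain ⟨v, hv, hve⟩ := hC e (er_edgeSet.1 he).1
  refine ⟨v, ⟨hv, fun hh => ?_⟩, hve⟩
  rw [Set.mem_singleton_iff] at hh
  subst hh
  rcases hx with rfl | rfl
  · exact havoid.2 hve
  · exact havoid.1 hve

lemma vc_of_vc_er {D : Set V} (hD : IsVC (er A p) D) : IsVC A (insert p D) := by
  intro e he
  by_cases hpe : p ∈ e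
  · exact ⟨p, Set.mem_insert p D, hpe⟩
  · obtain ⟨v, hv, hve⟩ := hD e (er_edgeSet.2 ⟨he, hpe⟩)
    exact ⟨v, Set.mem_insert_of_mem p hv, hve⟩

lemma minvc_er_not_mem (hlp : A.Adj l p) (hleaf : ∀ y, A.Adj l y → y = p)
    {D : Set V} (hD : IsMinVC (er A p) D) : l ∉ D ∧ p ∉ D := by
  constructor <;> intro hx
  case left =>
    have hvc : IsVC (er A p) (D \ {l}) := by
      intro e he
      obtain ⟨v, hv, hve⟩ := hD.1 e he
      exact ⟨v, ⟨hv, fun hh => (er_edge_avoids hlp hleaf e he).2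
        ((Set.mem_singleton_iff.1 hh) ▸ hve)⟩, hve⟩
    have h1 := hD.2 _ hvc
    have h2 : (D \ {l}).ncard + 1 = D.ncard := Set.ncard_diff_singleton_add_one hx
    omega
  case right =>
    have hvc : IsVC (er A p) (D \ {p}) := by
      intro e he
      obtain ⟨v, hv, hve⟩ := hD.1 e he
      exact ⟨v, ⟨hv, fun hh => (er_edge_avoids hlp hleaf e he).1
        ((Set.mem_singleton_iff.1 hh) ▸ hve)⟩, hve⟩
    have h1 := hD.2 _ hvc
    have h2 : (D \ {p}).ncard + 1 = D.ncard := Set.ncard_diff_singleton_add_one hx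
    omega

lemma step_up (hlp : A.Adj l p) (hleaf : ∀ y, A.Adj l y → y = p)
    {D : Set V} (hD : IsMinVC (er A p) D) :
    IsMinVC A (insert p D) ∧ l ∉ insert p D ∧ p ∉ D := by
  obtain ⟨hlD, hpD⟩ := minvc_er_not_mem hlp hleaf hD
  refine ⟨⟨vc_of_vc_er hD.1, fun E hE => ?_⟩, ?_, hpD⟩
  · have hE' : IsVC (er A p) ((E \ {l}) \ {p}) := by
      intro e he
      have havoid := er_edge_avoids hlp hleaf e he
      obtain ⟨v, hv, hve⟩ := hE e (er_edgeSet.1 he).1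
      exact ⟨v, ⟨⟨hv, fun hh => havoid.2 ((Set.mem_singleton_iff.1 hh) ▸ hve)⟩,
        fun hh => havoid.1 ((Set.mem_singleton_iff.1 hh) ▸ hve)⟩, hve⟩
    have h1 : D.ncard ≤ ((E \ {l}) \ {p}).ncard := hD.2 _ hE'
    have h2 : (insert p D).ncard = D.ncard + 1 := Set.ncard_insert_of_notMem hpD
    have h3 : ((E \ {l}) \ {p}).ncard + 1 ≤ E.ncard := by
      rcases cover_lp hlp hE with hl | hp
      · have hsub : (E \ {l}) \ {p} ⊆ E \ {l} := Set.diff_subset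
        have := Set.ncard_le_ncard hsub (E \ {l}).toFinite
        have := Set.ncard_diff_singleton_add_one hl (E.toFinite)
        omega
      · have hsub : (E \ {l}) \ {p} ⊆ E \ {p} := by
          intro a ha; exact ⟨ha.1.1, ha.2⟩
        have := Set.ncard_le_ncard hsub (E \ {p}).toFinite
        have := Set.ncard_diff_singleton_add_one hp (E.toFinite)
        omega
    omega
  · rintro (hh | hh)
    · exact hlp.ne hh
    · exact hlD hh

lemma step_down (hlp : A.Adj l p) (hleaf : ∀ y, A.Adj l y → y = p)
    {C : Set V} (hC : IsMinVC A C) :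
    ∃ x ∈ C, (x = l ∨ x = p) ∧ IsMinVC (er A p) (C \ {x}) := by
  by_cases hp : p ∈ C
  · refine ⟨p, hp, Or.inr rfl, vc_er_of_vc hlp hleaf hC.1 (Or.inr rfl), fun E hE => ?_⟩
    have h1 : C.ncard ≤ (insert p E).ncard := hC.2 _ (vc_of_vc_er hE)
    have h2 : (insert p E).ncard ≤ E.ncard + 1 := Set.ncard_insert_le p E
    have h3 : (C \ {p}).ncard + 1 = C.ncard := Set.ncard_diff_singleton_add_one hp
    omega
  · have hl : l ∈ C := (cover_lp hlp hC.1).resolve_right hp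
    refine ⟨l, hl, Or.inl rfl, vc_er_of_vc hlp hleaf hC.1 (Or.inl rfl), fun E hE => ?_⟩
    have h1 : C.ncard ≤ (insert p E).ncard := hC.2 _ (vc_of_vc_er hE)
    have h2 : (insert p E).ncard ≤ E.ncard + 1 := Set.ncard_insert_le p E
    have h3 : (C \ {l}).ncard + 1 = C.ncard := Set.ncard_diff_singleton_add_one hl
    omega

end Leaf

section Transfer
variable {A : SimpleGraph V} {l p : V}

lemma not_degen_er (hlp : A.Adj l p) (hleaf : ∀ y, A.Adj l y → y = p) :
    ¬ Degen (er A p) l ∧ ¬ Degen (er A p) p := by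
  constructor
  · rintro ⟨⟨C, hC, hmem⟩, -⟩
    exact (minvc_er_not_mem hlp hleaf hC).1 hmem
  · rintro ⟨⟨C, hC, hmem⟩, -⟩
    exact (minvc_er_not_mem hlp hleaf hC).2 hmem

lemma degen_transfer (hlp : A.Adj l p) (hleaf : ∀ y, A.Adj l y → y = p)
    {v : V} (hvl : v ≠ l) (hvp : v ≠ p) : Degen A v ↔ Degen (er A p) v := by
  constructor
  · rintro ⟨⟨C1, hC1, hv1⟩, ⟨C0, hC0, hv0⟩⟩
    obtain ⟨x1, hx1C, hx1, hmin1⟩ := step_down hlp hleaf hC1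
    obtain ⟨x0, hx0C, hx0, hmin0⟩ := step_down hlp hleaf hC0
    refine ⟨⟨C1 \ {x1}, hmin1, ⟨hv1, fun hh => ?_⟩⟩, ⟨C0 \ {x0}, hmin0, fun hh => hv0 hh.1⟩⟩
    rw [Set.mem_singleton_iff] at hh
    rcases hx1 with rfl | rfl
    · exact hvl hh
    · exact hvp hh
  · rintro ⟨⟨D1, hD1, hv1⟩, ⟨D0, hD0, hv0⟩⟩
    obtain ⟨hmin1, -, -⟩ := step_up hlp hleaf hD1
    obtain ⟨hmin0, -, -⟩ := step_up hlp hleaf hD0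
    refine ⟨⟨insert p D1, hmin1, Set.mem_insert_of_mem p hv1⟩,
      ⟨insert p D0, hmin0, ?_⟩⟩
    rintro (hh | hh)
    · exact hvp hh
    · exact hv0 hh

lemma excl_transfer (hlp : A.Adj l p) (hleaf : ∀ y, A.Adj l y → y = p)
    {e : Sym2 V} (hle : l ∉ e) (hpe : p ∉ e) : Exclusive A e ↔ Exclusive (er A p) e := by
  constructor
  · rintro ⟨he, hdeg, hmiss⟩
    refine ⟨er_edgeSet.2 ⟨he, hpe⟩, fun v hv => ?_, fun D hD => ?_⟩
    · exact (degen_transfer hlp hleaf (fun hh => hle (hh ▸ hv)) (fun hh => hpe (hh ▸ hv))).1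
        (hdeg v hv)
    · obtain ⟨hmin, -, -⟩ := step_up hlp hleaf hD
      obtain ⟨v, hv, hvC⟩ := hmiss _ hmin
      exact ⟨v, hv, fun hh => hvC (Set.mem_insert_of_mem p hh)⟩
  · rintro ⟨he, hdeg, hmiss⟩
    refine ⟨(er_edgeSet.1 he).1, fun v hv => ?_, fun C hC => ?_⟩
    · exact (degen_transfer hlp hleaf (fun hh => hle (hh ▸ hv)) (fun hh => hpe (hh ▸ hv))).2
        (hdeg v hv)
    · obtain ⟨x, hxC, hx, hmin⟩ := step_down hlp hleaf hC
      obtain ⟨v, hv, hvD⟩ := hmiss _ hmin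
      refine ⟨v, hv, fun hh => hvD ⟨hh, fun hh' => ?_⟩⟩
      rw [Set.mem_singleton_iff] at hh'
      rcases hx with rfl | rfl
      · exact hle (hh' ▸ hv)
      · exact hpe (hh' ▸ hv)

lemma excl_er_avoids (hlp : A.Adj l p) (hleaf : ∀ y, A.Adj l y → y = p)
    {e : Sym2 V} (he : Exclusive (er A p) e) : l ∉ e ∧ p ∉ e := by
  have := er_edge_avoids hlp hleaf e he.1
  exact ⟨this.2, this.1⟩

end Transfer

lemma goal_of_no_edges (A : SimpleGraph V) (hemp : A.edgeSet = ∅) :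
    (∀ v : V, Degen A v → ∃! e : Sym2 V, Exclusive A e ∧ v ∈ e) ∧
    IsMatch A {e | Exclusive A e} ∧
    Rsupp {e | Exclusive A e} = {v | Degen A v} := by
  have hminvc : ∀ C : Set V, IsMinVC A C → C = ∅ := by
    intro C hC
    have hvc : IsVC A (∅ : Set V) := fun e he => by rw [hemp] at he; exact absurd he (by simp)
    have := hC.2 _ hvc
    simp only [Set.ncard_empty, Nat.le_zero] at this
    exact (Set.ncard_eq_zero C.toFinite).1 this
  have hnodeg : ∀ v : V, ¬ Degen A v := by
    rintro v ⟨⟨C, hC, hv⟩, -⟩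
    rw [hminvc C hC] at hv
    exact hv
  have hnoexcl : ∀ e : Sym2 V, ¬ Exclusive A e := by
    rintro e ⟨he, -, -⟩
    rw [hemp] at he
    exact he
  refine ⟨fun v hv => absurd hv (hnodeg v), ⟨fun e he => absurd he (hnoexcl e),
    fun e he => absurd he (hnoexcl e)⟩, ?_⟩
  ext v
  simp only [Rsupp, Set.mem_setOf_eq]
  constructor
  · rintro ⟨e, he, -⟩
    exact absurd he (hnoexcl e)
  · intro hv
    exact absurd hv (hnodeg v)

lemma forest_goal (n : ℕ) : ∀ A : SimpleGraph V, A.IsAcyclic → A.edgeSet.ncard ≤ n →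
    (∀ v : V, Degen A v → ∃! e : Sym2 V, Exclusive A e ∧ v ∈ e) ∧
    IsMatch A {e | Exclusive A e} ∧
    Rsupp {e | Exclusive A e} = {v | Degen A v} := by
  induction n with
  | zero =>
    intro A hac hcard
    refine goal_of_no_edges A ?_
    rw [Nat.le_zero] at hcard
    exact (Set.ncard_eq_zero A.edgeSet.toFinite).1 hcard
  | succ n IH =>
    intro A hac hcard
    by_cases hemp : A.edgeSet = ∅
    · exact goal_of_no_edges A hemp
    · obtain ⟨l, p, hlp, hleaf⟩ := exists_leaf A hac (Set.nonempty_iff_ne_empty.2 hemp)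
      set A' := er A p with hA'
      have hac' : A'.IsAcyclic := by
        intro v c hc
        exact hac (c.mapLe (er_le A p)) ((SimpleGraph.Walk.mapLe_isCycle (er_le A p)).mpr hc)
      have hcard' : A'.edgeSet.ncard ≤ n := by
        have hss : A'.edgeSet ⊂ A.edgeSet := by
          constructor
          · intro e he; exact (er_edgeSet.1 he).1
          · intro hsub
            have h1 : s(l, p) ∈ A.edgeSet := (SimpleGraph.mem_edgeSet A).2 hlp
            have h2 := hsub h1
            exact (er_edgeSet.1 h2).2 (Sym2.mem_mk_right l p)
        have := Set.ncard_lt_ncard hss A.edgeSet.toFinite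
        omega
      obtain ⟨IH1, IH2, IH3⟩ := IH A' hac' hcard'
      by_cases hpall : ∀ C : Set V, IsMinVC A C → p ∈ C
      · -- Case (i): p is in every minimum vertex cover
        have hlnot : ∀ C : Set V, IsMinVC A C → l ∉ C :=
          fun C hC hl => not_both hlp hleaf hC ⟨hl, hpall C hC⟩
        have hdegeq : ∀ v, (Degen A v ↔ Degen A' v) := by
          intro v
          by_cases hvl : v = l
          · subst hvl
            refine iff_of_false ?_ (not_degen_er hlp hleaf).1
            rintro ⟨⟨C, hC, hmem⟩, -⟩
            exact hlnot C hC hmem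
          · by_cases hvp : v = p
            · subst hvp
              refine iff_of_false ?_ (not_degen_er hlp hleaf).2
              rintro ⟨-, ⟨C, hC, hmem⟩⟩
              exact hmem (hpall C hC)
            · exact degen_transfer hlp hleaf hvl hvp
        have hexcleq : ∀ e, (Exclusive A e ↔ Exclusive A' e) := by
          intro e
          constructor
          · intro he
            have hle : l ∉ e := fun hl =>
              ((hdegeq l).1 (he.2.1 l hl)) |> (not_degen_er hlp hleaf).1
            have hpe : p ∉ e := fun hp =>
              ((hdegeq p).1 (he.2.1 p hp)) |> (not_degen_er hlp hleaf).2
            exact (excl_transfer hlp hleaf hle hpe).1 he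
          · intro he
            obtain ⟨hle, hpe⟩ := excl_er_avoids hlp hleaf he
            exact (excl_transfer hlp hleaf hle hpe).2 he
        refine ⟨fun v hv => ?_, ⟨fun e he => he.1, fun e he f hf hef => ?_⟩, ?_⟩
        · obtain ⟨e, ⟨he, hve⟩, huniq⟩ := IH1 v ((hdegeq v).1 hv)
          exact ⟨e, ⟨(hexcleq e).2 he, hve⟩,
            fun f ⟨hf, hvf⟩ => huniq f ⟨(hexcleq f).1 hf, hvf⟩⟩
        · exact IH2.2 e ((hexcleq e).1 he) f ((hexcleq f).1 hf) hef
        · ext v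
          have h3 := Set.ext_iff.1 IH3 v
          simp only [Rsupp, Set.mem_setOf_eq] at h3 ⊢
          rw [hdegeq v, ← h3]
          constructor
          · rintro ⟨e, he, hv⟩; exact ⟨e, (hexcleq e).1 he, hv⟩
          · rintro ⟨e, he, hv⟩; exact ⟨e, (hexcleq e).2 he, hv⟩
      · -- Case (ii): some minimum vertex cover avoids p
        push_neg at hpall
        obtain ⟨C0, hC0, hp0⟩ := hpall
        have hl0 : l ∈ C0 := (cover_lp hlp hC0.1).resolve_right hp0
        obtain ⟨x, hxC, hx, hDmin⟩ := step_down hlp hleaf hC0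
        have hxl : x = l := by
          rcases hx with rfl | rfl
          · rfl
          · exact absurd hxC hp0
        subst hxl
        obtain ⟨hC1, hlC1, hpD⟩ := step_up hlp hleaf hDmin
        have hpC1 : p ∈ insert p (C0 \ {x}) := Set.mem_insert p _
        have hdegl : Degen A x :=
          ⟨⟨C0, hC0, hxC⟩, ⟨insert p (C0 \ {x}), hC1, hlC1⟩⟩
        have hdegp : Degen A p :=
          ⟨⟨insert p (C0 \ {x}), hC1, hpC1⟩, ⟨C0, hC0, hp0⟩⟩
        have hexlp : Exclusive A s(x, p) := by
          refine ⟨(SimpleGraph.mem_edgeSet A).2 hlp, fun v hv => ?_, fun C hC => ?_⟩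
          · rw [Sym2.mem_iff] at hv
            rcases hv with rfl | rfl
            · exact hdegl
            · exact hdegp
          · by_cases hlC : x ∈ C
            · exact ⟨p, Sym2.mem_mk_right x p,
                fun hp => not_both hlp hleaf hC ⟨hlC, hp⟩⟩
            · exact ⟨x, Sym2.mem_mk_left x p, hlC⟩
        have hchar : ∀ e, Exclusive A e → e = s(x, p) ∨ (x ∉ e ∧ p ∉ e) := by
          intro e he
          by_cases hle : x ∈ e
          · exact Or.inl (edge_at_l hlp hleaf e he.1 hle)
          · refine Or.inr ⟨hle, fun hpe => ?_⟩
            obtain ⟨y, rfl⟩ := Sym2.mem_iff_exists.1 hpe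
            have hy : y ∈ s(p, y) := Sym2.mem_mk_right p y
            have hAdj : A.Adj p y := (SimpleGraph.mem_edgeSet A).1 he.1
            have hyl : y ≠ x := fun hh => hle (hh ▸ hy)
            have hyp : y ≠ p := fun hh => hAdj.ne' hh
            have hdy : Degen A' y := (degen_transfer hlp hleaf hyl hyp).1 (he.2.1 y hy)
            obtain ⟨⟨D, hD, hyD⟩, -⟩ := hdy
            obtain ⟨hDup, -, -⟩ := step_up hlp hleaf hD
            obtain ⟨v, hv, hvC⟩ := he.2.2 _ hDup
            rw [Sym2.mem_iff] at hv
            rcases hv with rfl | rfl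
            · exact hvC (Set.mem_insert v D)
            · exact hvC (Set.mem_insert_of_mem p hyD)
        have hSS : ∀ e, Exclusive A e ↔ (e = s(x, p) ∨ Exclusive A' e) := by
          intro e
          constructor
          · intro he
            rcases hchar e he with h | ⟨h1, h2⟩
            · exact Or.inl h
            · exact Or.inr ((excl_transfer hlp hleaf h1 h2).1 he)
          · rintro (rfl | he)
            · exact hexlp
            · obtain ⟨hle, hpe⟩ := excl_er_avoids hlp hleaf he
              exact (excl_transfer hlp hleaf hle hpe).2 he
        have hdegiff : ∀ v, Degen A v ↔ (v = x ∨ v = p ∨ Degen A' v) := by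
          intro v
          constructor
          · intro hv
            by_cases hvl : v = x
            · exact Or.inl hvl
            · by_cases hvp : v = p
              · exact Or.inr (Or.inl hvp)
              · exact Or.inr (Or.inr ((degen_transfer hlp hleaf hvl hvp).1 hv))
          · rintro (rfl | rfl | hv)
            · exact hdegl
            · exact hdegp
            · have hvl : v ≠ x := fun hh => (not_degen_er hlp hleaf).1 (by rwa [hh] at hv)
              have hvp : v ≠ p := fun hh => (not_degen_er hlp hleaf).2 (by rwa [hh] at hv)
              exact (degen_transfer hlp hleaf hvl hvp).2 hv
        have hS'avoid : ∀ e, Exclusive A' e → x ∉ e ∧ p ∉ e :=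
          fun e he => excl_er_avoids hlp hleaf he
        refine ⟨fun v hv => ?_, ⟨fun e he => he.1, fun e he f hf hef w ⟨hwe, hwf⟩ => ?_⟩, ?_⟩
        · rcases (hdegiff v).1 hv with rfl | rfl | hv'
          · refine ⟨s(v, p), ⟨hexlp, Sym2.mem_mk_left v p⟩, ?_⟩
            rintro f ⟨hf, hvf⟩
            rcases hchar f hf with h | ⟨h1, -⟩
            · exact h
            · exact absurd hvf h1
          · refine ⟨s(x, v), ⟨hexlp, Sym2.mem_mk_right x v⟩, ?_⟩
            rintro f ⟨hf, hvf⟩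
            rcases hchar f hf with h | ⟨-, h2⟩
            · exact h
            · exact absurd hvf h2
          · obtain ⟨e, ⟨he, hve⟩, huniq⟩ := IH1 v hv'
            have hvl : v ≠ x := fun hh => (not_degen_er hlp hleaf).1 (by rwa [hh] at hv')
            have hvp : v ≠ p := fun hh => (not_degen_er hlp hleaf).2 (by rwa [hh] at hv')
            refine ⟨e, ⟨(hSS e).2 (Or.inr he), hve⟩, ?_⟩
            rintro f ⟨hf, hvf⟩
            rcases hchar f hf with rfl | ⟨h1, h2⟩
            · rw [Sym2.mem_iff] at hvf
              rcases hvf with rfl | rfl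
              · exact absurd rfl hvl
              · exact absurd rfl hvp
            · exact huniq f ⟨(excl_transfer hlp hleaf h1 h2).1 hf, hvf⟩
        · -- matching property
          rcases (hSS e).1 he with rfl | he'
          · rcases (hSS f).1 hf with rfl | hf'
            · exact hef rfl
            · rw [Sym2.mem_iff] at hwe
              rcases hwe with rfl | rfl
              · exact (hS'avoid f hf').1 hwf
              · exact (hS'avoid f hf').2 hwf
          · rcases (hSS f).1 hf with rfl | hf'
            · rw [Sym2.mem_iff] at hwf
              rcases hwf with rfl | rfl
              · exact (hS'avoid e he').1 hwe
              · exact (hS'avoid e he').2 hwe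
            · exact IH2.2 e he' f hf' hef w ⟨hwe, hwf⟩
        · -- support equals degenerate set
          ext v
          have h3 := Set.ext_iff.1 IH3 v
          simp only [Rsupp, Set.mem_setOf_eq] at h3 ⊢
          constructor
          · rintro ⟨e, he, hv⟩
            rcases (hSS e).1 he with rfl | he'
            · rw [Sym2.mem_iff] at hv
              rcases hv with rfl | rfl
              · exact hdegl
              · exact hdegp
            · exact (hdegiff v).2 (Or.inr (Or.inr (h3.1 ⟨e, he', hv⟩)))
          · intro hv
            rcases (hdegiff v).1 hv with rfl | rfl | hv'
            · exact ⟨s(v, p), hexlp, Sym2.mem_mk_left v p⟩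
            · exact ⟨s(x, v), hexlp, Sym2.mem_mk_right x v⟩
            · obtain ⟨e, he, hve⟩ := h3.2 hv'
              exact ⟨e, (hSS e).2 (Or.inr he), hve⟩

theorem degen_unique_exclusive_edge (A : SimpleGraph V) (hA : A.IsTree) :
    (∀ v : V, Degen A v → ∃! e : Sym2 V, Exclusive A e ∧ v ∈ e) ∧
    IsMatch A {e | Exclusive A e} ∧
    Rsupp {e | Exclusive A e} = {v | Degen A v} :=
  forest_goal A.edgeSet.ncard A hA.IsAcyclic le_rfl
end

section
/- Let A be a finite tree with a tricoloring (B, R, G), where B and G are vertex sets and R is a set of edges, such that B, G, and the set of endpoints of edges in R partition the vertex set, the edges in R are pairwise non-adjacent, every edge with one endpoint in G has its other endpoint in B, and every vertex of B has at least two neighbors in G. Then every edge of R belongs to every maximum matching of A. -/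
open SimpleGraph
set_option linter.unusedSectionVars false
set_option maxHeartbeats 1000000


variable {V : Type*} [Fintype V] [DecidableEq V]

section helpers
variable {A : SimpleGraph V}

lemma tree_path_length (hA : A.IsTree) {a b : V} {p : A.Walk a b} (hp : p.IsPath) :
    p.length = A.dist a b := by
  obtain ⟨q, hq, hql⟩ := hA.isConnected.exists_path_of_dist a b
  have : (⟨p, hp⟩ : A.Path a b) = ⟨q, hq⟩ := hA.IsAcyclic.path_unique _ _
  rw [show p = q from congrArg Subtype.val this, hql]

lemma tree_adj_dist (hA : A.IsTree) (r : V) {u v : V} (h : A.Adj u v) :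
    A.dist r u + 1 = A.dist r v ∨ A.dist r v + 1 = A.dist r u := by
  obtain ⟨q, hq, hql⟩ := hA.isConnected.exists_path_of_dist r v
  by_cases hu : u ∈ q.support
  · left
    have h1 : (q.takeUntil u hu).length = A.dist r u := tree_path_length hA (hq.takeUntil hu)
    have h2 : (q.dropUntil u hu).length = A.dist u v := tree_path_length hA (hq.dropUntil hu)
    have h3 : A.dist u v = 1 := by rwa [SimpleGraph.dist_eq_one_iff_adj]
    have h4 := congrArg SimpleGraph.Walk.length (q.take_spec hu)
    rw [SimpleGraph.Walk.length_append] at h4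
    omega
  · right
    have hp : (q.concat h.symm).IsPath := by
      rw [← SimpleGraph.Walk.isPath_reverse_iff, SimpleGraph.Walk.reverse_concat]
      rw [SimpleGraph.Walk.cons_isPath_iff]
      exact ⟨hq.reverse, by simpa using hu⟩
    have := tree_path_length hA hp
    rw [SimpleGraph.Walk.length_concat] at this
    omega

lemma tree_parent_unique (hA : A.IsTree) (r : V) {u v w : V} (hv : A.Adj v u) (hw : A.Adj w u)
    (hdv : A.dist r v + 1 = A.dist r u) (hdw : A.dist r w + 1 = A.dist r u) : v = w := by
  obtain ⟨p, hp, hpl⟩ := hA.isConnected.exists_path_of_dist r v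
  obtain ⟨q, hq, hql⟩ := hA.isConnected.exists_path_of_dist r w
  have hup : u ∉ p.support := by
    intro hu
    have := tree_path_length hA (hp.takeUntil hu)
    have := SimpleGraph.Walk.length_takeUntil_le p hu
    omega
  have huq : u ∉ q.support := by
    intro hu
    have := tree_path_length hA (hq.takeUntil hu)
    have := SimpleGraph.Walk.length_takeUntil_le q hu
    omega
  have hpp : (p.concat hv).IsPath := by
    rw [← SimpleGraph.Walk.isPath_reverse_iff, SimpleGraph.Walk.reverse_concat,
      SimpleGraph.Walk.cons_isPath_iff]
    exact ⟨hp.reverse, by simpa using hup⟩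
  have hqq : (q.concat hw).IsPath := by
    rw [← SimpleGraph.Walk.isPath_reverse_iff, SimpleGraph.Walk.reverse_concat,
      SimpleGraph.Walk.cons_isPath_iff]
    exact ⟨hq.reverse, by simpa using huq⟩
  have heq : (⟨p.concat hv, hpp⟩ : A.Path r u) = ⟨q.concat hw, hqq⟩ := hA.IsAcyclic.path_unique _ _
  have heq' : p.concat hv = q.concat hw := congrArg Subtype.val heq
  have hv' : (p.concat hv).getVert (A.dist r v) = v := by
    rw [SimpleGraph.Walk.concat_eq_append, SimpleGraph.Walk.getVert_append]
    simp [hpl]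
  have hw' : (q.concat hw).getVert (A.dist r w) = w := by
    rw [SimpleGraph.Walk.concat_eq_append, SimpleGraph.Walk.getVert_append]
    simp [hql]
  have hvw : A.dist r v = A.dist r w := by omega
  rw [← hv', heq', hvw, hw']

lemma tree_edge_bound (hA : A.IsTree) (D : Set (Sym2 V)) (W : Set V)
    (hDE : D ⊆ A.edgeSet) (hDW : ∀ e ∈ D, ∀ v ∈ e, v ∈ W) (hne : W.Nonempty) :
    D.ncard < W.ncard := by
  classical
  obtain ⟨r, hr⟩ := hne
  set f : Sym2 V → V := fun e =>
    if h : ∃ p : V × V, e = s(p.1, p.2) ∧ A.dist r p.2 + 1 = A.dist r p.1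
    then h.choose.1 else r with hf
  have hspec : ∀ e ∈ D, ∃ p : V × V, e = s(p.1, p.2) ∧ A.dist r p.2 + 1 = A.dist r p.1 := by
    intro e he
    induction e with
    | _ a b =>
      have hadj : A.Adj a b := hDE he
      rcases tree_adj_dist hA r hadj with h | h
      · exact ⟨(b, a), Sym2.eq_swap, h⟩
      · exact ⟨(a, b), rfl, h⟩
  have hkey : ∀ e ∈ D, ∃ z : V, e = s(f e, z) ∧ A.dist r z + 1 = A.dist r (f e) := by
    intro e he
    have h := hspec e he
    rw [hf]
    simp only [dif_pos h]
    exact ⟨h.choose.2, h.choose_spec.1, h.choose_spec.2⟩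
  have himg : f '' D ⊆ W \ {r} := by
    rintro _ ⟨e, he, rfl⟩
    obtain ⟨z, hez, hdz⟩ := hkey e he
    set x := f e with hx
    refine ⟨hDW e he _ (by rw [hez]; exact Sym2.mem_mk_left _ _), ?_⟩
    simp only [Set.mem_singleton_iff]
    intro hfr
    rw [hfr] at hdz
    simp [SimpleGraph.dist_self] at hdz
  have hinj : Set.InjOn f D := by
    intro e1 h1 e2 h2 hfe
    obtain ⟨z1, hz1, hd1⟩ := hkey e1 h1
    obtain ⟨z2, hz2, hd2⟩ := hkey e2 h2
    have hadj1 : A.Adj (f e1) z1 := by have := hDE h1; rwa [hz1, SimpleGraph.mem_edgeSet] at this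
    have hadj2 : A.Adj (f e2) z2 := by have := hDE h2; rwa [hz2, SimpleGraph.mem_edgeSet] at this
    rw [← hfe] at hz2 hadj2 hd2
    have : z1 = z2 := tree_parent_unique hA r hadj1.symm hadj2.symm hd1 hd2
    rw [hz1, hz2, this]
  calc D.ncard = (f '' D).ncard := (Set.ncard_image_of_injOn hinj).symm
    _ ≤ (W \ {r}).ncard := Set.ncard_le_ncard himg (Set.toFinite _)
    _ < W.ncard := Set.ncard_diff_singleton_lt_of_mem hr (Set.toFinite _)

lemma rsupp_mono {R T : Set (Sym2 V)} (h : R ⊆ T) : Rsupp R ⊆ Rsupp T := by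
  rintro v ⟨e, he, hv⟩; exact ⟨e, h he, hv⟩

lemma rsupp_union (R T : Set (Sym2 V)) : Rsupp (R ∪ T) = Rsupp R ∪ Rsupp T := by
  ext v
  constructor
  · rintro ⟨e, he | he, hv⟩
    · exact Or.inl ⟨e, he, hv⟩
    · exact Or.inr ⟨e, he, hv⟩
  · rintro (⟨e, he, hv⟩ | ⟨e, he, hv⟩)
    · exact ⟨e, Or.inl he, hv⟩
    · exact ⟨e, Or.inr he, hv⟩

lemma rsupp_ncard {T : Set (Sym2 V)} (hd : ∀ e ∈ T, ¬ e.IsDiag)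
    (hm : ∀ e ∈ T, ∀ f ∈ T, e ≠ f → ∀ v : V, ¬(v ∈ e ∧ v ∈ f)) :
    (Rsupp T).ncard = 2 * T.ncard := by
  classical
  revert hd hm
  refine Set.Finite.induction_on
    (motive := fun T _ => (∀ e ∈ T, ¬ e.IsDiag) →
      (∀ e ∈ T, ∀ f ∈ T, e ≠ f → ∀ v : V, ¬(v ∈ e ∧ v ∈ f)) →
      (Rsupp T).ncard = 2 * T.ncard) T (Set.toFinite T) ?_ ?_
  · intro _ _
    simp only [Set.ncard_empty, Nat.mul_zero]
    convert Set.ncard_empty V using 2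
    ext v; simp [Rsupp]
  · intro e T' heT hT' ih hd hm
    have hRins : Rsupp (insert e T') = {v | v ∈ e} ∪ Rsupp T' := by
      rw [show insert e T' = {e} ∪ T' from by simp, rsupp_union]
      congr 1
      ext v; simp [Rsupp]
    have hde : ¬ e.IsDiag := hd e (Set.mem_insert _ _)
    obtain ⟨a, b⟩ := e
    have hab : a ≠ b := by simpa using hde
    have hmemset : {v | v ∈ s(a,b)} = ({a, b} : Set V) := by
      ext v; simp [Sym2.mem_iff]
    have hdisj : Disjoint ({v | v ∈ s(a,b)} : Set V) (Rsupp T') := by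
      rw [Set.disjoint_left]
      rintro v hv ⟨f, hf, hvf⟩
      exact hm _ (Set.mem_insert _ _) f (Set.mem_insert_of_mem _ hf)
        (fun h => heT (h ▸ hf)) v ⟨hv, hvf⟩
    rw [hRins, Set.ncard_union_eq hdisj (Set.toFinite _) (Set.toFinite _), hmemset,
      Set.ncard_insert_of_notMem (by simpa using hab) (Set.toFinite _), Set.ncard_singleton,
      Set.ncard_insert_of_notMem heT (Set.toFinite _),
      ih (fun f hf => hd f (Set.mem_insert_of_mem _ hf))
        (fun f hf g hg hfg => hm f (Set.mem_insert_of_mem _ hf) g (Set.mem_insert_of_mem _ hg) hfg)]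
    ring

lemma hall_B_matching (hA : A.IsTree) (B G : Set V) (hBG : Disjoint B G)
    (hBdeg : ∀ b ∈ B, 2 ≤ (A.neighborSet b ∩ G).ncard) :
    ∃ f : B → V, Function.Injective f ∧ ∀ b : B, A.Adj b (f b) ∧ (f b : V) ∈ G := by
  classical
  set t : B → Finset V := fun b => Finset.univ.filter (fun g => A.Adj b g ∧ g ∈ G) with ht
  have htmem : ∀ (b : B) (g : V), g ∈ t b ↔ A.Adj b g ∧ g ∈ G := by
    intro b g; simp [ht]
  have hcard : ∀ b : B, 2 ≤ (t b).card := by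
    intro b
    have h2 := hBdeg b b.2
    have heq : A.neighborSet ↑b ∩ G = ↑(t b) := by
      ext v; simp [ht, SimpleGraph.mem_neighborSet]
    rwa [heq, Set.ncard_coe_finset] at h2
  have hhall : ∀ s : Finset B, s.card ≤ (s.biUnion t).card := by
    intro s
    rcases s.eq_empty_or_nonempty with rfl | hs
    · simp
    set U := s.biUnion t with hU
    set E' : Finset (Sym2 V) := s.biUnion (fun b => (t b).image (fun g => s((b:V), g))) with hE'
    have hmemE' : ∀ x ∈ E', ∃ b ∈ s, ∃ g ∈ t b, x = s((b:V), g) := by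
      intro x hx
      simp only [hE', Finset.mem_biUnion, Finset.mem_image] at hx
      obtain ⟨b, hb, g, hg, rfl⟩ := hx
      exact ⟨b, hb, g, hg, rfl⟩
    have hcardE : 2 * s.card ≤ E'.card := by
      rw [hE', Finset.card_biUnion]
      · calc 2 * s.card = ∑ _b ∈ s, 2 := by rw [Finset.sum_const]; ring
          _ ≤ ∑ b ∈ s, ((t b).image (fun g => s((b:V), g))).card := by
            apply Finset.sum_le_sum
            intro b _
            rw [Finset.card_image_of_injOn]
            · exact hcard b
            · intro g1 hg1 g2 hg2 hgeq
              rcases Sym2.eq_iff.mp hgeq with ⟨-, h⟩ | ⟨h1, h2⟩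
              · exact h
              · exact h2.trans h1
      · intro b1 _ b2 _ hne
        rw [Function.onFun, Finset.disjoint_left]
        rintro x hx1 hx2
        simp only [Finset.mem_image] at hx1 hx2
        obtain ⟨g1, hg1, rfl⟩ := hx1
        obtain ⟨g2, hg2, heq⟩ := hx2
        rcases Sym2.eq_iff.mp heq.symm with ⟨h1, -⟩ | ⟨h1, h2⟩
        · exact hne (Subtype.ext h1)
        · refine absurd ?_ (Set.disjoint_left.mp hBG b1.2)
          rw [h1]
          exact ((htmem b2 g2).mp hg2).2
    have hbound : E'.card < s.card + U.card := by
      have := tree_edge_bound hA ↑E' ↑(s.image (Subtype.val) ∪ U) ?_ ?_ ?_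
      · rw [Set.ncard_coe_finset, Set.ncard_coe_finset] at this
        calc E'.card < (s.image Subtype.val ∪ U).card := this
          _ ≤ (s.image Subtype.val).card + U.card := Finset.card_union_le _ _
          _ ≤ s.card + U.card := by
            gcongr; exact Finset.card_image_le
      · intro x hx
        obtain ⟨b, hb, g, hg, rfl⟩ := hmemE' x hx
        exact ((htmem b g).mp hg).1
      · intro x hx v hv
        obtain ⟨b, hb, g, hg, rfl⟩ := hmemE' x hx
        rcases Sym2.mem_iff.mp hv with rfl | rfl
        · simp only [Finset.coe_union, Set.mem_union, Finset.mem_coe]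
          exact Or.inl (Finset.mem_image_of_mem _ hb)
        · simp only [Finset.coe_union, Set.mem_union, Finset.mem_coe]
          exact Or.inr (Finset.mem_biUnion.mpr ⟨b, hb, hg⟩)
      · obtain ⟨b, hb⟩ := hs
        refine ⟨↑b, ?_⟩
        simp only [Finset.coe_union, Set.mem_union, Finset.mem_coe]
        exact Or.inl (Finset.mem_image_of_mem _ hb)
    omega
  obtain ⟨f, hfinj, hft⟩ := (Finset.all_card_le_biUnion_card_iff_exists_injective t).mp hhall
  exact ⟨f, hfinj, fun b => (htmem b (f b)).mp (hft b)⟩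


lemma exists_matching_card (hA : A.IsTree) (B : Set V) (R : Set (Sym2 V)) (G : Set V)
    (hBC : IsBColoring A B R G) :
    ∃ N : Set (Sym2 V), IsMatch A N ∧ N.ncard = B.ncard + R.ncard := by
  classical
  obtain ⟨hRE, hcover, hBG, hBS, hGS, hRm, hGadj, hBdeg⟩ := hBC
  obtain ⟨f, hfinj, hf⟩ := hall_B_matching hA B G hBG hBdeg
  set F : B → Sym2 V := fun b => s((b:V), f b) with hF
  have hFinj : Function.Injective F := by
    intro b1 b2 heq
    rcases Sym2.eq_iff.mp heq with ⟨h1, -⟩ | ⟨h1, h2⟩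
    · exact Subtype.ext h1
    · exact absurd ((h1 ▸ (hf b2).2 : (b1:V) ∈ G)) (Set.disjoint_left.mp hBG b1.2)
  have hFmem : ∀ (x : Sym2 V) (b : B), x = F b → ∀ v ∈ x, v ∈ B ∪ G := by
    rintro x b rfl v hv
    rcases Sym2.mem_iff.mp hv with rfl | rfl
    · exact Or.inl b.2
    · exact Or.inr (hf b).2
  refine ⟨R ∪ Set.range F, ⟨?_, ?_⟩, ?_⟩
  · rintro x (hx | ⟨b, rfl⟩)
    · exact hRE hx
    · exact (hf b).1
  · have hRF : ∀ x ∈ R, ∀ y ∈ Set.range F, ∀ v : V, ¬(v ∈ x ∧ v ∈ y) := by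
      rintro x hx y ⟨b, rfl⟩ v ⟨hvx, hvy⟩
      have hvS : v ∈ Rsupp R := ⟨x, hx, hvx⟩
      rcases hFmem _ b rfl v hvy with h | h
      · exact Set.disjoint_left.mp hBS h hvS
      · exact Set.disjoint_left.mp hGS h hvS
    rintro x (hx | hx) y (hy | hy) hne v hv
    · exact hRm x hx y hy hne v hv
    · exact hRF x hx y hy v hv
    · exact hRF y hy x hx v ⟨hv.2, hv.1⟩
    · obtain ⟨b1, rfl⟩ := hx
      obtain ⟨b2, rfl⟩ := hy
      obtain ⟨hv1, hv2⟩ := hv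
      have hb12 : b1 ≠ b2 := fun h => hne (congrArg F h)
      rcases Sym2.mem_iff.mp hv1 with rfl | rfl <;> rcases Sym2.mem_iff.mp hv2 with h | h
      · exact hb12 (Subtype.ext h)
      · exact Set.disjoint_left.mp hBG b1.2 (h ▸ (hf b2).2)
      · exact Set.disjoint_left.mp hBG b2.2 (h.symm ▸ (hf b1).2)
      · exact hb12 (hfinj h)
  · have hdisj : Disjoint R (Set.range F) := by
      rw [Set.disjoint_left]
      rintro x hx ⟨b, rfl⟩
      have : (b : V) ∈ Rsupp R := ⟨F b, hx, Sym2.mem_mk_left _ _⟩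
      exact Set.disjoint_left.mp hBS b.2 this
    rw [Set.ncard_union_eq hdisj (Set.toFinite _) (Set.toFinite _)]
    have : (Set.range F).ncard = B.ncard := by
      rw [← Nat.card_coe_set_eq, ← Nat.card_coe_set_eq,
        Nat.card_range_of_injective hFinj]
    omega

end helpers

theorem red_edges_in_every_max_matching (A : SimpleGraph V) (hA : A.IsTree)
    (B : Set V) (R : Set (Sym2 V)) (G : Set V) (hBC : IsBColoring A B R G)
    (e : Sym2 V) (he : e ∈ R) (M : Set (Sym2 V)) (hM : IsMaxMatch A M) :
    e ∈ M := by
  classical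
  obtain ⟨⟨hME, hMm⟩, hMmax⟩ := hM
  obtain ⟨hRE, hcover, hBG, hBS, hGS, hRm, hGadj, hBdeg⟩ := hBC
  set S := Rsupp R with hS
  -- lower bound on |M|
  obtain ⟨N, hN, hNcard⟩ := exists_matching_card hA B R G
    ⟨hRE, hcover, hBG, hBS, hGS, hRm, hGadj, hBdeg⟩
  have hlow : B.ncard + R.ncard ≤ M.ncard := hNcard ▸ hMmax N hN
  -- classify the edges of M
  set MB : Set (Sym2 V) := {f | f ∈ M ∧ ∃ v, v ∈ f ∧ v ∈ B} with hMB
  set MS : Set (Sym2 V) := {f | f ∈ M ∧ ∀ v, v ∈ f → v ∈ S} with hMS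
  have hsplit : M = MB ∪ MS := by
    apply Set.Subset.antisymm
    · intro x hx
      induction x with
      | _ a b =>
        have hadj : A.Adj a b := hME hx
        by_cases haB : a ∈ B
        · exact Or.inl ⟨hx, a, Sym2.mem_mk_left _ _, haB⟩
        by_cases hbB : b ∈ B
        · exact Or.inl ⟨hx, b, Sym2.mem_mk_right _ _, hbB⟩
        have haS : a ∈ S := by
          have := hcover ▸ Set.mem_univ a
          rcases (hcover.symm ▸ Set.mem_univ a : a ∈ B ∪ G ∪ S) with (h | h) | h
          · exact absurd h haB
          · exact absurd (hGadj a b hadj h) hbB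
          · exact h
        have hbS : b ∈ S := by
          rcases (hcover.symm ▸ Set.mem_univ b : b ∈ B ∪ G ∪ S) with (h | h) | h
          · exact absurd h hbB
          · exact absurd (hGadj b a hadj.symm h) haB
          · exact h
        refine Or.inr ⟨hx, fun v hv => ?_⟩
        rcases Sym2.mem_iff.mp hv with rfl | rfl
        · exact haS
        · exact hbS
    · rintro x (hx | hx) <;> exact hx.1
  have hdisjBS : Disjoint MB MS := by
    rw [Set.disjoint_left]
    rintro x ⟨hxM, v, hvx, hvB⟩ ⟨-, hall⟩
    exact Set.disjoint_left.mp hBS hvB (hall v hvx)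
  have hMcard : M.ncard = MB.ncard + MS.ncard := by
    rw [hsplit, Set.ncard_union_eq hdisjBS (Set.toFinite _) (Set.toFinite _)]
  -- |MB| ≤ |B|
  have hMBcard : MB.ncard ≤ B.ncard := by
    set g : Sym2 V → V := fun x => if h : ∃ v, v ∈ x ∧ v ∈ B then h.choose else (Quot.out x).1
      with hg
    have hgmem : ∀ x ∈ MB, g x ∈ x ∧ g x ∈ B := by
      intro x hx
      have h : ∃ v, v ∈ x ∧ v ∈ B := hx.2
      simp only [hg, dif_pos h]
      exact h.choose_spec
    have hginj : Set.InjOn g MB := by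
      intro x1 h1 x2 h2 hgeq
      by_contra hne
      exact hMm x1 h1.1 x2 h2.1 hne (g x1)
        ⟨(hgmem x1 h1).1, hgeq ▸ (hgmem x2 h2).1⟩
    calc MB.ncard = (g '' MB).ncard := (Set.ncard_image_of_injOn hginj).symm
      _ ≤ B.ncard := Set.ncard_le_ncard
          (by rintro _ ⟨x, hx, rfl⟩; exact (hgmem x hx).2) (Set.toFinite _)
  -- supports
  have hRdiag : ∀ x ∈ R, ¬ x.IsDiag := fun x hx => A.not_isDiag_of_mem_edgeSet (hRE hx)
  have hScard : S.ncard = 2 * R.ncard := rsupp_ncard hRdiag hRm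
  have hMSsub : MS ⊆ M := fun x hx => hx.1
  have hMSm : ∀ x ∈ MS, ∀ y ∈ MS, x ≠ y → ∀ v : V, ¬(v ∈ x ∧ v ∈ y) :=
    fun x hx y hy hne => hMm x hx.1 y hy.1 hne
  have hMSdiag : ∀ x ∈ MS, ¬ x.IsDiag :=
    fun x hx => A.not_isDiag_of_mem_edgeSet (hME hx.1)
  have hMSsupp : (Rsupp MS).ncard = 2 * MS.ncard := rsupp_ncard hMSdiag hMSm
  have hMSsuppsub : Rsupp MS ⊆ S := by
    rintro v ⟨x, hx, hvx⟩
    exact hx.2 v hvx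
  have hMScard : MS.ncard ≤ R.ncard := by
    have := Set.ncard_le_ncard hMSsuppsub (Set.toFinite _)
    omega
  have hMSeq : MS.ncard = R.ncard := by omega
  have hMSS : Rsupp MS = S := by
    apply Set.eq_of_subset_of_ncard_le hMSsuppsub _ (Set.toFinite _)
    omega
  -- now suppose e ∉ M
  by_contra heM
  have heMS : e ∉ MS := fun h => heM h.1
  set DR : Set (Sym2 V) := R \ MS with hDR
  set DM : Set (Sym2 V) := MS \ R with hDM
  have hsub1 : Rsupp DR ⊆ Rsupp DM := by
    rintro v ⟨r, hr, hvr⟩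
    have hvS : v ∈ S := ⟨r, hr.1, hvr⟩
    obtain ⟨m, hm, hvm⟩ : v ∈ Rsupp MS := hMSS.symm ▸ hvS
    have hmR : m ∉ R := by
      intro hmR2
      have hmr : m ≠ r := fun h => hr.2 (h ▸ hm)
      exact hRm m hmR2 r hr.1 hmr v ⟨hvm, hvr⟩
    exact ⟨m, ⟨hm, hmR⟩, hvm⟩
  have hsub2 : Rsupp DM ⊆ Rsupp DR := by
    rintro v ⟨m, hm, hvm⟩
    have hvS : v ∈ S := hm.1.2 v hvm
    obtain ⟨r, hr, hvr⟩ : v ∈ S := hvS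
    have hrMS : r ∉ MS := by
      intro hrMS2
      have hrm : r ≠ m := fun h => hm.2 (h ▸ hr)
      exact hMSm r hrMS2 m hm.1 hrm v ⟨hvr, hvm⟩
    exact ⟨r, ⟨hr, hrMS⟩, hvr⟩
  have hT : Rsupp DR = Rsupp DM := Set.Subset.antisymm hsub1 hsub2
  set D : Set (Sym2 V) := DR ∪ DM with hD
  have hDsupp : Rsupp D = Rsupp DR := by
    rw [hD, rsupp_union, hT, Set.union_self]
  have hDRcard : (Rsupp DR).ncard = 2 * DR.ncard :=
    rsupp_ncard (fun x hx => hRdiag x hx.1) (fun x hx y hy => hRm x hx.1 y hy.1)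
  have hDMcard : (Rsupp DM).ncard = 2 * DM.ncard :=
    rsupp_ncard (fun x hx => hMSdiag x hx.1) (fun x hx y hy => hMSm x hx.1 y hy.1)
  have hDdisj : Disjoint DR DM := by
    rw [Set.disjoint_left]
    rintro x ⟨-, hx2⟩ ⟨hx3, -⟩
    exact hx2 hx3
  have hDcard : D.ncard = DR.ncard + DM.ncard :=
    Set.ncard_union_eq hDdisj (Set.toFinite _) (Set.toFinite _)
  have heD : e ∈ D := Or.inl ⟨he, heMS⟩
  have hDE : D ⊆ A.edgeSet := by
    rintro x (hx | hx)
    · exact hRE hx.1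
    · exact hME hx.1.1
  have hDW : ∀ x ∈ D, ∀ v ∈ x, v ∈ Rsupp DR := by
    intro x hx v hv
    rw [← hDsupp]
    exact ⟨x, hx, hv⟩
  have hTnonempty : (Rsupp DR).Nonempty := by
    refine ⟨(Quot.out e).1, e, ⟨he, heMS⟩, ?_⟩
    exact Sym2.out_fst_mem e
  have hbound := tree_edge_bound hA D (Rsupp DR) hDE hDW hTnonempty
  rw [← hT] at hDMcard
  omega
end

section
/- Let A be a finite tree with a tricoloring (B, R, G) satisfying: B, G, and the endpoints of edges in R partition the vertices; edges of R are pairwise non-adjacent; every edge with one endpoint in G has the other endpoint in B; every vertex of B has at least two neighbors in G. Then every vertex of G is optional, i.e., for each g in G there exists a maximum matching of A no edge of which has g as an endpoint. -/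
variable {V : Type*} [Fintype V] [DecidableEq V]

open SimpleGraph

section AuxLemmas

variable {V : Type*}

/-- support-cardinality lemma for matchings -/
lemma supp_ncard_aux [Fintype V] (S : Set (Sym2 V)) :
    (∀ e ∈ S, ¬ e.IsDiag) →
    (∀ e ∈ S, ∀ f ∈ S, e ≠ f → ∀ v : V, ¬(v ∈ e ∧ v ∈ f)) →
    {v : V | ∃ e ∈ S, v ∈ e}.ncard = 2 * S.ncard := by
  refine Set.Finite.induction_on (motive := fun S _ => (∀ e ∈ S, ¬ e.IsDiag) →
    (∀ e ∈ S, ∀ f ∈ S, e ≠ f → ∀ v : V, ¬(v ∈ e ∧ v ∈ f)) →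
    {v : V | ∃ e ∈ S, v ∈ e}.ncard = 2 * S.ncard) S (Set.toFinite S) (by simp) ?_
  rintro a s ha hsfin ih hdiag hdisj
  have hseq : {v : V | ∃ e ∈ insert a s, v ∈ e}
      = {v : V | v ∈ a} ∪ {v : V | ∃ e ∈ s, v ∈ e} := by
    ext v
    simp only [Set.mem_setOf_eq, Set.mem_insert_iff, Set.mem_union]
    constructor
    · rintro ⟨e, (rfl | he), hv⟩
      · exact Or.inl hv
      · exact Or.inr ⟨e, he, hv⟩
    · rintro (hv | ⟨e, he, hv⟩)
      · exact ⟨a, Or.inl rfl, hv⟩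
      · exact ⟨e, Or.inr he, hv⟩
  induction a using Sym2.ind with
  | _ x y =>
  have hxy : x ≠ y := by
    intro h
    exact hdiag s(x, y) (Set.mem_insert _ _) (by simp [Sym2.isDiag_iff_proj_eq, h])
  have haset : {v : V | v ∈ s(x, y)} = ({x, y} : Set V) := by
    ext v; simp [Sym2.mem_iff]
  have hdisj2 : Disjoint ({v : V | v ∈ s(x, y)}) {v : V | ∃ e ∈ s, v ∈ e} := by
    rw [Set.disjoint_left]
    rintro v hv ⟨e, he, hve⟩
    have hne : s(x, y) ≠ e := by rintro rfl; exact ha he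
    exact hdisj s(x, y) (Set.mem_insert _ _) e (Set.mem_insert_of_mem _ he) hne v ⟨hv, hve⟩
  have hih := ih (fun e he => hdiag e (Set.mem_insert_of_mem _ he))
    (fun e he f hf => hdisj e (Set.mem_insert_of_mem _ he) f (Set.mem_insert_of_mem _ hf))
  rw [hseq, Set.ncard_union_eq hdisj2 (Set.toFinite _) (Set.toFinite _), hih,
    Set.ncard_insert_of_notMem ha hsfin, haset, Set.ncard_pair hxy]
  ring

variable {A : SimpleGraph V}

/-- the unique path between two vertices of a tree -/
noncomputable def pth (hA : A.IsTree) (v g : V) : A.Walk v g :=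
  (hA.existsUnique_path v g).choose

lemma pth_isPath (hA : A.IsTree) (v g : V) : (pth hA v g).IsPath :=
  (hA.existsUnique_path v g).choose_spec.1

lemma pth_unique (hA : A.IsTree) {v g : V} (p : A.Walk v g) (hp : p.IsPath) :
    p = pth hA v g :=
  (hA.existsUnique_path v g).choose_spec.2 p hp

/-- the parent of `v` in the tree rooted at `g` -/
noncomputable def par (hA : A.IsTree) (g v : V) : V := (pth hA v g).getVert 1

lemma pth_decomp (hA : A.IsTree) {g v : V} (hv : v ≠ g) :
    ∃ (w : V) (h : A.Adj v w) (q : A.Walk w g),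
      pth hA v g = Walk.cons h q ∧ par hA g v = w ∧ q.IsPath ∧ v ∉ q.support := by
  have hp := pth_isPath hA v g
  cases hE : pth hA v g with
  | nil => exact absurd rfl hv
  | cons h q =>
    rw [hE, Walk.cons_isPath_iff] at hp
    exact ⟨_, h, q, rfl, by rw [par, hE]; simp, hp.1, hp.2⟩

lemma par_eq_g (hA : A.IsTree) {g b : V} (hadj : A.Adj b g) : par hA g b = g := by
  have hpath : (Walk.cons hadj Walk.nil).IsPath := by
    rw [Walk.cons_isPath_iff]
    exact ⟨Walk.IsPath.nil, by simp [hadj.ne]⟩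
  rw [par, ← pth_unique hA _ hpath]
  simp

lemma par_eq_of_adj [DecidableEq V] (hA : A.IsTree) {g b c : V} (hb : b ≠ g) (hc : c ≠ g)
    (hadj : A.Adj b c) (hpar : par hA g b ≠ c) : par hA g c = b := by
  obtain ⟨w, h, q, hE, hw, hq, hbq⟩ := pth_decomp hA hb
  have hcp : c ∉ (pth hA b g).support := by
    intro hcs
    rw [hE, Walk.support_cons] at hcs
    have hcb : c ≠ b := fun h' => A.irrefl (h' ▸ hadj)
    rcases List.mem_cons.1 hcs with h1 | h2
    · exact hcb h1
    · have hq2path : (q.dropUntil c h2).IsPath := hq.dropUntil h2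
      have hbq2 : b ∉ (q.dropUntil c h2).support :=
        fun hb2 => hbq (Walk.support_dropUntil_subset q h2 hb2)
      have hP : (Walk.cons hadj (q.dropUntil c h2)).IsPath := by
        rw [Walk.cons_isPath_iff]; exact ⟨hq2path, hbq2⟩
      have hEq : Walk.cons hadj (q.dropUntil c h2) = pth hA b g := pth_unique hA _ hP
      apply hpar
      rw [par, ← hEq]
      simp
  have hpath : (Walk.cons hadj.symm (pth hA b g)).IsPath := by
    rw [Walk.cons_isPath_iff]; exact ⟨pth_isPath hA b g, hcp⟩
  rw [par, ← pth_unique hA _ hpath]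
  simp

end AuxLemmas

theorem green_vertices_optional (A : SimpleGraph V) (hA : A.IsTree)
    (B : Set V) (R : Set (Sym2 V)) (G : Set V) (hBC : IsBColoring A B R G)
    (g : V) (hg : g ∈ G) :
    ∃ M : Set (Sym2 V), IsMaxMatch A M ∧ ∀ e ∈ M, g ∉ e := by
  classical
  obtain ⟨hRE, hcover, hBG, hBR, hGR, hRmatch, hGadjB, hBdeg⟩ := hBC
  have hbg : ∀ b ∈ B, b ≠ g := fun b hb => hBG.ne_of_mem hb hg
  -- choose a green neighbor of each blue vertex avoiding its parent
  have hchoice : ∀ b ∈ B, ∃ c, c ∈ G ∧ A.Adj b c ∧ c ≠ par hA g b := by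
    intro b hb
    have h2 : 1 < (A.neighborSet b ∩ G).ncard := lt_of_lt_of_le one_lt_two (hBdeg b hb)
    obtain ⟨x, hx, y, hy, hxy⟩ := (Set.one_lt_ncard (Set.toFinite _)).1 h2
    by_cases hxp : x = par hA g b
    · exact ⟨y, hy.2, hy.1, fun h => hxy (h ▸ hxp ▸ rfl)⟩
    · exact ⟨x, hx.2, hx.1, hxp⟩
  choose f0 hf0 using hchoice
  set F : V → V := fun b => if hb : b ∈ B then f0 b hb else b with hF
  have hFG : ∀ b ∈ B, F b ∈ G := by intro b hb; simp only [hF, dif_pos hb]; exact (hf0 b hb).1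
  have hFadj : ∀ b ∈ B, A.Adj b (F b) := by
    intro b hb; simp only [hF, dif_pos hb]; exact (hf0 b hb).2.1
  have hFpar : ∀ b ∈ B, F b ≠ par hA g b := by
    intro b hb; simp only [hF, dif_pos hb]; exact (hf0 b hb).2.2
  have hFg : ∀ b ∈ B, F b ≠ g := by
    intro b hb h
    have hadj : A.Adj b g := h ▸ hFadj b hb
    exact hFpar b hb (h.trans (par_eq_g hA hadj).symm)
  have hinj : Set.InjOn F B := by
    intro b1 h1 b2 h2 heq
    by_contra hne
    have e1 : par hA g (F b1) = b1 :=
      par_eq_of_adj hA (hbg b1 h1) (hFg b1 h1) (hFadj b1 h1) (Ne.symm (hFpar b1 h1))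
    have e2 : par hA g (F b2) = b2 :=
      par_eq_of_adj hA (hbg b2 h2) (hFg b2 h2) (hFadj b2 h2) (Ne.symm (hFpar b2 h2))
    rw [heq] at e1
    exact hne (e1.symm.trans e2)
  -- the matching
  refine ⟨(fun b => s(b, F b)) '' B ∪ R, ⟨⟨?_, ?_⟩, ?_⟩, ?_⟩
  · -- subset of edges
    rintro e (⟨b, hb, rfl⟩ | he)
    · exact hFadj b hb
    · exact hRE he
  · -- pairwise non-adjacent
    rintro e (⟨b1, hb1, rfl⟩ | he) f (⟨b2, hb2, rfl⟩ | hf) hef v ⟨hve, hvf⟩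
    · rcases Sym2.mem_iff.1 hve with rfl | rfl <;> rcases Sym2.mem_iff.1 hvf with h | h
      · exact hef (by rw [h])
      · exact hBG.ne_of_mem hb1 (h ▸ hFG b2 hb2) h
      · exact hBG.ne_of_mem hb2 (hFG b1 hb1) h.symm
      · exact hef (by rw [hinj hb1 hb2 h])
    · rcases Sym2.mem_iff.1 hve with rfl | rfl
      · exact Set.disjoint_left.1 hBR hb1 ⟨_, hf, hvf⟩
      · exact Set.disjoint_left.1 hGR (hFG b1 hb1) ⟨_, hf, hvf⟩
    · rcases Sym2.mem_iff.1 hvf with rfl | rfl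
      · exact Set.disjoint_left.1 hBR hb2 ⟨_, he, hve⟩
      · exact Set.disjoint_left.1 hGR (hFG b2 hb2) ⟨_, he, hve⟩
    · exact hRmatch e he f hf hef v ⟨hve, hvf⟩
  · -- maximality
    intro N hN
    obtain ⟨hNE, hNd⟩ := hN
    -- cardinality of M
    have hinjSym : Set.InjOn (fun b => s(b, F b)) B := by
      intro b1 h1 b2 h2 heq
      rcases Sym2.eq_iff.1 heq with ⟨h, _⟩ | ⟨h, h'⟩
      · exact h
      · exact absurd h (hBG.ne_of_mem h1 (hFG b2 h2))
    have himdisj : Disjoint ((fun b => s(b, F b)) '' B) R := by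
      rw [Set.disjoint_left]
      rintro e ⟨b, hb, rfl⟩ heR
      exact Set.disjoint_left.1 hBR hb ⟨_, heR, Sym2.mem_mk_left _ _⟩
    have hMcard : ((fun b => s(b, F b)) '' B ∪ R).ncard = B.ncard + R.ncard := by
      rw [Set.ncard_union_eq himdisj (Set.toFinite _) (Set.toFinite _),
        Set.ncard_image_of_injOn hinjSym]
    rw [hMcard]
    -- split N
    set NB : Set (Sym2 V) := {e ∈ N | ∃ v ∈ e, v ∈ B} with hNB
    set NC : Set (Sym2 V) := N \ NB with hNC
    have hNsplit : N = NB ∪ NC := (Set.union_diff_cancel (Set.sep_subset _ _)).symm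
    have hNBle : NB.ncard ≤ B.ncard := by
      set cB : Sym2 V → V := fun e => if h : ∃ v ∈ e, v ∈ B then h.choose else g with hcB
      have hmem : ∀ e ∈ NB, cB e ∈ e ∧ cB e ∈ B := by
        rintro e ⟨heN, hv⟩
        simp only [hcB, dif_pos hv]
        exact hv.choose_spec
      refine Set.ncard_le_ncard_of_injOn cB (fun e he => (hmem e he).2) ?_ (Set.toFinite _)
      intro e1 h1 e2 h2 heq
      by_contra hne
      exact hNd e1 h1.1 e2 h2.1 hne (cB e1) ⟨(hmem e1 h1).1, heq ▸ (hmem e2 h2).1⟩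
    have hNCle : NC.ncard ≤ R.ncard := by
      have hNCsupp : {v : V | ∃ e ∈ NC, v ∈ e} ⊆ Rsupp R := by
        rintro v ⟨e, ⟨heN, heB⟩, hve⟩
        have hvB : v ∉ B := fun h => heB ⟨heN, v, hve, h⟩
        have hvG : v ∉ G := by
          intro hvG
          obtain ⟨w, rfl⟩ := Sym2.mem_iff_exists.1 hve
          have hadj : A.Adj v w := hNE heN
          exact heB ⟨heN, w, Sym2.mem_mk_right _ _, hGadjB v w hadj hvG⟩
        have : v ∈ B ∪ G ∪ Rsupp R := hcover ▸ Set.mem_univ v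
        rcases this with (h | h) | h
        · exact absurd h hvB
        · exact absurd h hvG
        · exact h
      have hNCcard : {v : V | ∃ e ∈ NC, v ∈ e}.ncard = 2 * NC.ncard :=
        supp_ncard_aux NC
          (fun e he => A.not_isDiag_of_mem_edgeSet (hNE he.1))
          (fun e he f' hf' => hNd e he.1 f' hf'.1)
      have hRcard : (Rsupp R).ncard = 2 * R.ncard :=
        supp_ncard_aux R (fun e he => A.not_isDiag_of_mem_edgeSet (hRE he)) hRmatch
      have h2 : 2 * NC.ncard ≤ 2 * R.ncard := by
        rw [← hNCcard, ← hRcard]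
        exact Set.ncard_le_ncard hNCsupp (Set.toFinite _)
      omega
    calc N.ncard = (NB ∪ NC).ncard := by rw [← hNsplit]
      _ ≤ NB.ncard + NC.ncard := Set.ncard_union_le _ _
      _ ≤ B.ncard + R.ncard := Nat.add_le_add hNBle hNCle
  · -- g avoidance
    rintro e (⟨b, hb, rfl⟩ | he) hge
    · rcases Sym2.mem_iff.1 hge with h | h
      · exact hbg b hb h.symm
      · exact hFg b hb h.symm
    · exact Set.disjoint_left.1 hGR hg ⟨e, he, hge⟩
end

section
/- Let A be a finite tree with a tricoloring (B, R, G) satisfying: B, G, and the endpoints of edges in R partition the vertices; edges of R are pairwise non-adjacent; every edge with one endpoint in G has the other endpoint in B; every vertex of B has at least two neighbors in G. Then every vertex of B is unavoidable: every maximum matching of A contains an edge with that vertex as an endpoint, yet no single edge incident to it lies in all maximum matchings. -/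
variable {V : Type*} [Fintype V] [DecidableEq V]

open SimpleGraph

lemma dist_getVert_le {A : SimpleGraph V} (hc : A.Connected) {r x : V} (p : A.Walk r x) (i : ℕ) :
    A.dist r (p.getVert i) ≤ i := by
  induction i with
  | zero => simp [p.getVert_zero, SimpleGraph.dist_self]
  | succ i ih =>
    by_cases h : i < p.length
    · have hadj := p.adj_getVert_succ h
      have h1 : A.dist (p.getVert i) (p.getVert (i+1)) = 1 :=
        (SimpleGraph.dist_eq_one_iff_adj).mpr hadj
      calc A.dist r (p.getVert (i+1)) ≤ A.dist r (p.getVert i) + A.dist (p.getVert i) (p.getVert (i+1)) :=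
            hc.dist_triangle
        _ ≤ i + 1 := by omega
    · push_neg at h
      have h1 : p.getVert (i+1) = x := p.getVert_of_length_le (by omega)
      have h2 : p.getVert i = x := p.getVert_of_length_le h
      have := ih
      rw [h2] at this
      rw [h1]; omega

/-- there is a shortest path from r to x -/
lemma exists_shortest {A : SimpleGraph V} (hc : A.Connected) (r x : V) :
    ∃ p : A.Walk r x, p.IsPath ∧ p.length = A.dist r x := by
  obtain ⟨w, hw⟩ := hc.exists_walk_length_eq_dist r x
  refine ⟨w.bypass, w.bypass_isPath, le_antisymm ?_ (SimpleGraph.dist_le _)⟩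
  calc w.bypass.length ≤ w.length := w.length_bypass_le
    _ = A.dist r x := hw

lemma tree_adj_dist_ne {A : SimpleGraph V} (hA : A.IsTree) {r x y : V} (hxy : A.Adj x y) :
    A.dist r x ≠ A.dist r y := by
  intro hEq
  have hc := hA.isConnected
  obtain ⟨p, hp, hlen⟩ := exists_shortest hc r x
  have hy : y ∉ p.support := by
    intro hy
    obtain ⟨i, hi, hile⟩ := SimpleGraph.Walk.mem_support_iff_exists_getVert.mp hy
    have h1 : A.dist r y ≤ i := hi ▸ dist_getVert_le hc p i
    have : i = p.length := by omega
    rw [this, p.getVert_length] at hi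
    exact hxy.ne hi
  have hq : (p.concat hxy).IsPath := by
    rw [SimpleGraph.Walk.isPath_def] at hp ⊢
    rw [SimpleGraph.Walk.support_concat]
    simp [List.concat_eq_append, List.nodup_append, hp, hy]
    exact fun a ha h => hy (h ▸ ha)
  obtain ⟨p', hp', hlen'⟩ := exists_shortest hc r y
  have := hA.existsUnique_path r y
  have heq : p.concat hxy = p' := (this.unique hq hp')
  have : (p.concat hxy).length = p'.length := by rw [heq]
  rw [SimpleGraph.Walk.length_concat, hlen, hlen', hEq] at this
  omega

lemma tree_parent_unique_s6 {A : SimpleGraph V} (hA : A.IsTree) {r x q c : V}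
    (hx : A.Adj x c) (hq : A.Adj q c) (hdx : A.dist r x + 1 = A.dist r c)
    (hdq : A.dist r q + 1 = A.dist r c) : x = q := by
  have hc := hA.isConnected
  obtain ⟨px, hpx, hlx⟩ := exists_shortest hc r x
  obtain ⟨pq, hpq, hlq⟩ := exists_shortest hc r q
  have hcx : c ∉ px.support := by
    intro hmem
    obtain ⟨i, hi, hile⟩ := SimpleGraph.Walk.mem_support_iff_exists_getVert.mp hmem
    have h1 : A.dist r c ≤ i := hi ▸ dist_getVert_le hc px i
    omega
  have hcq : c ∉ pq.support := by
    intro hmem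
    obtain ⟨i, hi, hile⟩ := SimpleGraph.Walk.mem_support_iff_exists_getVert.mp hmem
    have h1 : A.dist r c ≤ i := hi ▸ dist_getVert_le hc pq i
    omega
  have hQx : (px.concat hx).IsPath := by
    rw [SimpleGraph.Walk.isPath_def] at hpx ⊢
    rw [SimpleGraph.Walk.support_concat]
    simp [List.concat_eq_append, List.nodup_append, hpx, hcx]
    exact fun a ha h => hcx (h ▸ ha)
  have hQq : (pq.concat hq).IsPath := by
    rw [SimpleGraph.Walk.isPath_def] at hpq ⊢
    rw [SimpleGraph.Walk.support_concat]
    simp [List.concat_eq_append, List.nodup_append, hpq, hcq]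
    exact fun a ha h => hcq (h ▸ ha)
  have huniq := hA.existsUnique_path r c
  have heq : px.concat hx = pq.concat hq := (huniq.unique hQx hQq)
  have hdxq : A.dist r x = A.dist r q := by omega
  have h1 : (px.concat hx).getVert (A.dist r x) = x := by
    rw [SimpleGraph.Walk.concat_eq_append, SimpleGraph.Walk.getVert_append]
    rw [hlx]
    simp
  have h2 : (pq.concat hq).getVert (A.dist r x) = q := by
    rw [SimpleGraph.Walk.concat_eq_append, SimpleGraph.Walk.getVert_append]
    rw [hlq, ← hdxq]
    simp
  rw [← h1, heq, h2]

set_option linter.unusedSectionVars false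

lemma tree_child_dist {A : SimpleGraph V} (hA : A.IsTree) {r c p g : V}
    (hcp : A.Adj c p) (hcg : A.Adj c g) (hgp : g ≠ p)
    (hdp : A.dist r p + 1 = A.dist r c) : A.dist r g = A.dist r c + 1 := by
  have hc := hA.isConnected
  have h1 : A.dist r g ≤ A.dist r c + 1 := by
    have := hc.dist_triangle (u := r) (v := c) (w := g)
    have h2 : A.dist c g = 1 := SimpleGraph.dist_eq_one_iff_adj.mpr hcg
    omega
  have h2 : A.dist r c ≤ A.dist r g + 1 := by
    have := hc.dist_triangle (u := r) (v := g) (w := c)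
    have h3 : A.dist g c = 1 := SimpleGraph.dist_eq_one_iff_adj.mpr hcg.symm
    omega
  have h3 : A.dist r g ≠ A.dist r c := tree_adj_dist_ne hA hcg.symm
  have h4 : ¬ (A.dist r g + 1 = A.dist r c) := by
    intro h
    exact hgp (tree_parent_unique_s6 hA hcg.symm hcp.symm h hdp)
  omega

lemma matched_partner {A : SimpleGraph V} {M : Set (Sym2 V)} (hM : IsMatch A M)
    {e : Sym2 V} (he : e ∈ M) {v : V} (hv : v ∈ e) :
    ∃ w, A.Adj v w ∧ e = s(v, w) := by
  have hE := hM.1 he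
  induction e with
  | _ x y =>
    rw [SimpleGraph.mem_edgeSet] at hE
    rcases Sym2.mem_iff.mp hv with rfl | rfl
    · exact ⟨y, hE, rfl⟩
    · exact ⟨x, hE.symm, Sym2.eq_swap⟩

lemma matching_insert {A : SimpleGraph V} {M : Set (Sym2 V)} (hM : IsMatch A M) {c g : V}
    (hadj : A.Adj c g) (hcu : ¬∃ e ∈ M, c ∈ e) (hgu : ¬∃ e ∈ M, g ∈ e) :
    IsMatch A (insert s(c,g) M) ∧ s(c,g) ∉ M := by
  have hnm : s(c,g) ∉ M := fun h => hcu ⟨_, h, Sym2.mem_mk_left c g⟩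
  refine ⟨⟨?_, ?_⟩, hnm⟩
  · rintro f (rfl | hf)
    · exact hadj
    · exact hM.1 hf
  · rintro e (rfl | he) f (rfl | hf) hne v ⟨hv1, hv2⟩
    · exact hne rfl
    · rcases Sym2.mem_iff.mp hv1 with rfl | rfl
      · exact hcu ⟨f, hf, hv2⟩
      · exact hgu ⟨f, hf, hv2⟩
    · rcases Sym2.mem_iff.mp hv2 with rfl | rfl
      · exact hcu ⟨e, he, hv1⟩
      · exact hgu ⟨e, he, hv1⟩
    · exact hM.2 e he f hf hne v ⟨hv1, hv2⟩

lemma aug {A : SimpleGraph V} (hA : A.IsTree) {B G : Set V}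
    (hGB : ∀ v w : V, A.Adj v w → v ∈ G → w ∈ B)
    (hB2 : ∀ b ∈ B, 2 ≤ (A.neighborSet b ∩ G).ncard) (r : V) :
    ∀ n (M : Set (Sym2 V)), M.ncard = n → IsMatch A M → ∀ c p : V, c ∈ B →
    (¬ ∃ e ∈ M, c ∈ e) → A.Adj c p → A.dist r p + 1 = A.dist r c →
    ∃ M' : Set (Sym2 V), IsMatch A M' ∧ M'.ncard = M.ncard + 1 ∧
      ∀ f : Sym2 V, ((f ∈ M' ∧ f ∉ M) ∨ (f ∈ M ∧ f ∉ M')) →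
        ∀ v ∈ f, A.dist r c ≤ A.dist r v := by
  have hconn := hA.isConnected
  intro n
  induction n using Nat.strong_induction_on with
  | _ n IH =>
  intro M hn hM c p hcB hcu hcp hdp
  -- choose a green neighbor g ≠ p
  obtain ⟨g, ⟨hgN, hgG⟩, hgp⟩ :=
    Set.exists_ne_of_one_lt_ncard (s := A.neighborSet c ∩ G) (by have := hB2 c hcB; omega) p
  have hcg : A.Adj c g := hgN
  have hdg : A.dist r g = A.dist r c + 1 := tree_child_dist hA hcp hcg hgp hdp
  by_cases hgu : ∃ e ∈ M, g ∈ e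
  case neg =>
    obtain ⟨hM', hnm⟩ := matching_insert hM hcg hcu hgu
    refine ⟨insert s(c,g) M, hM', Set.ncard_insert_of_notMem hnm (Set.toFinite _), ?_⟩
    rintro f (⟨hf1, hf2⟩ | ⟨hf1, hf2⟩) v hv
    · rcases hf1 with rfl | hf1
      · rcases Sym2.mem_iff.mp hv with rfl | rfl
        · exact le_refl _
        · omega
      · exact absurd hf1 hf2
    · exact absurd (Set.mem_insert_iff.mpr (Or.inr hf1)) hf2
  case pos =>
    obtain ⟨e, heM, hge⟩ := hgu
    obtain ⟨b1, hgb1, rfl⟩ := matched_partner hM heM hge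
    have hb1e : b1 ∈ s(g, b1) := Sym2.mem_mk_right g b1
    have hb1B : b1 ∈ B := hGB g b1 hgb1 hgG
    have hb1c : b1 ≠ c := by
      rintro rfl
      exact hcu ⟨_, heM, hb1e⟩
    -- distance of b1
    have hd1 : A.dist r b1 ≤ A.dist r g + 1 := by
      have := hconn.dist_triangle (u := r) (v := g) (w := b1)
      have h2 : A.dist g b1 = 1 := SimpleGraph.dist_eq_one_iff_adj.mpr hgb1
      omega
    have hd2 : A.dist r g ≤ A.dist r b1 + 1 := by
      have := hconn.dist_triangle (u := r) (v := b1) (w := g)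
      have h2 : A.dist b1 g = 1 := SimpleGraph.dist_eq_one_iff_adj.mpr hgb1.symm
      omega
    have hd3 : A.dist r b1 ≠ A.dist r g := tree_adj_dist_ne hA hgb1.symm
    have hd4 : ¬ (A.dist r b1 + 1 = A.dist r g) := by
      intro h
      exact hb1c (tree_parent_unique_s6 hA hgb1.symm hcg h (by omega))
    have hdb1 : A.dist r b1 = A.dist r c + 2 := by omega
    set M₁ := M \ {s(g, b1)} with hM₁def
    have hM₁ : IsMatch A M₁ :=
      ⟨fun f hf => hM.1 hf.1, fun e' he' f hf hne v => hM.2 e' he'.1 f hf.1 hne v⟩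
    have hb1u : ¬∃ f ∈ M₁, b1 ∈ f := by
      rintro ⟨f, ⟨hfM, hfe⟩, hb1f⟩
      exact hM.2 _ heM f hfM (fun h => hfe (by simp [← h])) b1 ⟨hb1e, hb1f⟩
    have hnpos : 0 < n := hn ▸ (Set.ncard_pos (Set.toFinite _)).mpr ⟨_, heM⟩
    have hn1 : M₁.ncard = n - 1 := by
      rw [hM₁def, Set.ncard_diff_singleton_of_mem heM, hn]
    obtain ⟨M₂, hM₂, hn₂, hdiff₂⟩ := IH (n-1) (by omega) M₁ hn1 hM₁ b1 g hb1B hb1u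
      hgb1.symm (by omega)
    have hcu₂ : ¬∃ f ∈ M₂, c ∈ f := by
      rintro ⟨f, hf, hcf⟩
      by_cases hfM₁ : f ∈ M₁
      · exact hcu ⟨f, hfM₁.1, hcf⟩
      · have := hdiff₂ f (Or.inl ⟨hf, hfM₁⟩) c hcf
        omega
    have hgu₂ : ¬∃ f ∈ M₂, g ∈ f := by
      rintro ⟨f, hf, hgf⟩
      by_cases hfM₁ : f ∈ M₁
      · exact hM.2 _ heM f hfM₁.1 (fun h => hfM₁.2 (by simp [← h])) g ⟨hge, hgf⟩
      · have := hdiff₂ f (Or.inl ⟨hf, hfM₁⟩) g hgf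
        omega
    obtain ⟨hM', hnm⟩ := matching_insert hM₂ hcg hcu₂ hgu₂
    refine ⟨insert s(c,g) M₂, hM', ?_, ?_⟩
    · rw [Set.ncard_insert_of_notMem hnm (Set.toFinite _), hn₂, hn1, hn]
      omega
    · rintro f (⟨hf1, hf2⟩ | ⟨hf1, hf2⟩) v hv
      · rcases hf1 with rfl | hf1
        · rcases Sym2.mem_iff.mp hv with rfl | rfl
          · exact le_refl _
          · omega
        · by_cases hfM₁ : f ∈ M₁
          · exact absurd hfM₁.1 hf2
          · have := hdiff₂ f (Or.inl ⟨hf1, hfM₁⟩) v hv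
            omega
      · by_cases hfe : f = s(g, b1)
        · subst hfe
          rcases Sym2.mem_iff.mp hv with rfl | rfl <;> omega
        · have hfM₁ : f ∈ M₁ := ⟨hf1, by simpa using hfe⟩
          have hfM₂ : f ∉ M₂ := fun h => hf2 (Set.mem_insert_iff.mpr (Or.inr h))
          have := hdiff₂ f (Or.inr ⟨hfM₁, hfM₂⟩) v hv
          omega

lemma dist_two {A : SimpleGraph V} (hA : A.IsTree) {b g b1 : V}
    (h1 : A.Adj b g) (h2 : A.Adj g b1) (h3 : b1 ≠ b) :
    A.dist b g = 1 ∧ A.dist b b1 = 2 := by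
  have hconn := hA.isConnected
  have hdg : A.dist b g = 1 := SimpleGraph.dist_eq_one_iff_adj.mpr h1
  have hle : A.dist b b1 ≤ A.dist b g + 1 := by
    have := hconn.dist_triangle (u := b) (v := g) (w := b1)
    have h4 : A.dist g b1 = 1 := SimpleGraph.dist_eq_one_iff_adj.mpr h2
    omega
  have hne : A.dist b b1 ≠ A.dist b g := tree_adj_dist_ne hA h2.symm
  have hpos : 0 < A.dist b b1 := hconn.pos_dist_of_ne (Ne.symm h3)
  exact ⟨hdg, by omega⟩

lemma exists_max_match (A : SimpleGraph V) : ∃ M, IsMaxMatch A M := by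
  obtain ⟨M, hM, hmax⟩ := Set.Finite.exists_maximalFor Set.ncard {M | IsMatch A M}
    (Set.toFinite _) ⟨∅, ⟨Set.empty_subset _, by simp⟩⟩
  refine ⟨M, hM, fun N hN => ?_⟩
  by_contra h
  push_neg at h
  have := hmax (j := N) hN h.le
  omega


theorem brown_vertices_unavoidable (A : SimpleGraph V) (hA : A.IsTree)
    (B : Set V) (R : Set (Sym2 V)) (G : Set V) (hBC : IsBColoring A B R G)
    (b : V) (hb : b ∈ B) :
    (∀ M : Set (Sym2 V), IsMaxMatch A M → ∃ e ∈ M, b ∈ e) ∧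
    (∀ e ∈ A.edgeSet, b ∈ e → ∃ M : Set (Sym2 V), IsMaxMatch A M ∧ e ∉ M) := by
  obtain ⟨hR, hpart, hBG, hBR, hGR, hRmatch, hGB, hB2⟩ := hBC
  constructor
  · -- part 1 : every maximum matching saturates b
    intro M hMmax
    by_contra hbu
    push_neg at hbu
    have hM := hMmax.1
    have hcu : ¬∃ e ∈ M, b ∈ e := by
      rintro ⟨e, he, hbe⟩; exact hbu e he hbe
    obtain ⟨g, hgN, hgG⟩ : ∃ g, g ∈ A.neighborSet b ∧ g ∈ G := by
      obtain ⟨g, hg⟩ : (A.neighborSet b ∩ G).Nonempty := by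
        apply Set.nonempty_of_ncard_ne_zero
        have := hB2 b hb; omega
      exact ⟨g, hg.1, hg.2⟩
    have hcg : A.Adj b g := hgN
    by_cases hgu : ∃ e ∈ M, g ∈ e
    · obtain ⟨e, heM, hge⟩ := hgu
      obtain ⟨b1, hgb1, rfl⟩ := matched_partner hM heM hge
      have hb1B : b1 ∈ B := hGB g b1 hgb1 hgG
      have hb1b : b1 ≠ b := by
        rintro rfl
        exact hcu ⟨_, heM, Sym2.mem_mk_right g b1⟩
      obtain ⟨hdg, hdb1⟩ := dist_two hA hcg hgb1 hb1b
      set M₁ := M \ {s(g, b1)} with hM₁def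
      have hM₁ : IsMatch A M₁ :=
        ⟨fun f hf => hM.1 hf.1, fun e' he' f hf hne v => hM.2 e' he'.1 f hf.1 hne v⟩
      have hb1u : ¬∃ f ∈ M₁, b1 ∈ f := by
        rintro ⟨f, ⟨hfM, hfe⟩, hb1f⟩
        exact hM.2 _ heM f hfM (fun h => hfe (by simp [← h])) b1
          ⟨Sym2.mem_mk_right g b1, hb1f⟩
      have hnpos : 0 < M.ncard := (Set.ncard_pos (Set.toFinite _)).mpr ⟨_, heM⟩
      have hn1 : M₁.ncard = M.ncard - 1 := by
        rw [hM₁def, Set.ncard_diff_singleton_of_mem heM]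
      obtain ⟨M₂, hM₂, hn₂, hdiff₂⟩ := aug hA hGB hB2 b M₁.ncard M₁ rfl hM₁ b1 g hb1B hb1u
        hgb1.symm (by omega)
      have hbu₂ : ¬∃ f ∈ M₂, b ∈ f := by
        rintro ⟨f, hf, hbf⟩
        by_cases hfM₁ : f ∈ M₁
        · exact hcu ⟨f, hfM₁.1, hbf⟩
        · have := hdiff₂ f (Or.inl ⟨hf, hfM₁⟩) b hbf
          rw [SimpleGraph.dist_self] at this
          omega
      have hgu₂ : ¬∃ f ∈ M₂, g ∈ f := by
        rintro ⟨f, hf, hgf⟩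
        by_cases hfM₁ : f ∈ M₁
        · exact hM.2 _ heM f hfM₁.1 (fun h => hfM₁.2 (by simp [← h])) g ⟨hge, hgf⟩
        · have := hdiff₂ f (Or.inl ⟨hf, hfM₁⟩) g hgf
          omega
      obtain ⟨hM', hnm⟩ := matching_insert hM₂ hcg hbu₂ hgu₂
      have := hMmax.2 _ hM'
      rw [Set.ncard_insert_of_notMem hnm (Set.toFinite _)] at this
      omega
    · obtain ⟨hM', hnm⟩ := matching_insert hM hcg hcu hgu
      have := hMmax.2 _ hM'
      rw [Set.ncard_insert_of_notMem hnm (Set.toFinite _)] at this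
      omega
  · -- part 2 : no edge at b is in every maximum matching
    intro e₀ he₀ hbe₀
    obtain ⟨M, hMmax⟩ := exists_max_match A
    have hM := hMmax.1
    by_cases he₀M : e₀ ∈ M
    case neg => exact ⟨M, hMmax, he₀M⟩
    case pos =>
    obtain ⟨x, hbx, rfl⟩ := matched_partner hM he₀M hbe₀
    obtain ⟨g, ⟨hgN, hgG⟩, hgx⟩ :=
      Set.exists_ne_of_one_lt_ncard (s := A.neighborSet b ∩ G)
        (by have := hB2 b hb; omega) x
    have hcg : A.Adj b g := hgN
    have hgb : g ≠ b := hcg.ne'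
    have hg_not_e₀ : g ∉ s(b, x) := by
      rw [Sym2.mem_iff]
      rintro (rfl | rfl)
      · exact hgb rfl
      · exact hgx rfl
    have hne_e : s(b, g) ≠ s(b, x) := fun h => hg_not_e₀ (h ▸ Sym2.mem_mk_right b g)
    have hbonly : ∀ f ∈ M, b ∈ f → f = s(b, x) := by
      intro f hf hbf
      by_contra hne
      exact hM.2 _ he₀M f hf (Ne.symm hne) b ⟨hbe₀, hbf⟩
    have hnpos : 0 < M.ncard := (Set.ncard_pos (Set.toFinite _)).mpr ⟨_, he₀M⟩
    by_cases hgu : ∃ f ∈ M, g ∈ f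
    case neg =>
      set M₁ := M \ {s(b, x)} with hM₁def
      have hM₁ : IsMatch A M₁ :=
        ⟨fun f hf => hM.1 hf.1, fun e' he' f hf hne v => hM.2 e' he'.1 f hf.1 hne v⟩
      have hbu₁ : ¬∃ f ∈ M₁, b ∈ f := by
        rintro ⟨f, ⟨hfM, hfe⟩, hbf⟩
        exact hfe (by simp [hbonly f hfM hbf])
      have hgu₁ : ¬∃ f ∈ M₁, g ∈ f := fun ⟨f, hf, hgf⟩ => hgu ⟨f, hf.1, hgf⟩
      obtain ⟨hM', hnm⟩ := matching_insert hM₁ hcg hbu₁ hgu₁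
      refine ⟨insert s(b, g) M₁, ⟨hM', fun N hN => ?_⟩, ?_⟩
      · rw [Set.ncard_insert_of_notMem hnm (Set.toFinite _), hM₁def,
          Set.ncard_diff_singleton_of_mem he₀M]
        have := hMmax.2 N hN
        omega
      · rw [Set.mem_insert_iff]
        rintro (h | h)
        · exact hne_e h.symm
        · exact h.2 rfl
    case pos =>
      obtain ⟨f, hfM, hgf⟩ := hgu
      obtain ⟨b1, hgb1, rfl⟩ := matched_partner hM hfM hgf
      have hfne : s(g, b1) ≠ s(b, x) := fun h => hg_not_e₀ (h ▸ Sym2.mem_mk_left g b1)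
      have hb1B : b1 ∈ B := hGB g b1 hgb1 hgG
      have hb1b : b1 ≠ b := by
        rintro rfl
        exact hM.2 _ he₀M _ hfM hfne.symm b1 ⟨hbe₀, Sym2.mem_mk_right g b1⟩
      obtain ⟨hdg, hdb1⟩ := dist_two hA hcg hgb1 hb1b
      set M₂ := (M \ {s(b, x)}) \ {s(g, b1)} with hM₂def
      have hM₂ : IsMatch A M₂ :=
        ⟨fun f' hf' => hM.1 hf'.1.1, fun e' he' f' hf' hne v => hM.2 e' he'.1.1 f' hf'.1.1 hne v⟩
      have hb1u : ¬∃ f' ∈ M₂, b1 ∈ f' := by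
        rintro ⟨f', ⟨⟨hf'M, _⟩, hf'e⟩, hb1f⟩
        exact hM.2 _ hfM f' hf'M (fun h => hf'e (by simp [← h])) b1
          ⟨Sym2.mem_mk_right g b1, hb1f⟩
      have hfM₁ : s(g, b1) ∈ M \ {s(b, x)} := ⟨hfM, by simpa using hfne⟩
      have hn2pos : 0 < (M \ {s(b, x)}).ncard := (Set.ncard_pos (Set.toFinite _)).mpr ⟨_, hfM₁⟩
      have hn1 : (M \ {s(b, x)}).ncard = M.ncard - 1 :=
        Set.ncard_diff_singleton_of_mem he₀M
      have hn2 : M₂.ncard = M.ncard - 2 := by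
        rw [hM₂def, Set.ncard_diff_singleton_of_mem hfM₁, hn1]
        omega
      obtain ⟨M₃, hM₃, hn₃, hdiff₃⟩ := aug hA hGB hB2 b M₂.ncard M₂ rfl hM₂ b1 g hb1B hb1u
        hgb1.symm (by omega)
      have hbu₃ : ¬∃ f' ∈ M₃, b ∈ f' := by
        rintro ⟨f', hf', hbf⟩
        by_cases hfM₂ : f' ∈ M₂
        · exact hfM₂.1.2 (by simp [hbonly f' hfM₂.1.1 hbf])
        · have := hdiff₃ f' (Or.inl ⟨hf', hfM₂⟩) b hbf
          rw [SimpleGraph.dist_self] at this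
          omega
      have hgu₃ : ¬∃ f' ∈ M₃, g ∈ f' := by
        rintro ⟨f', hf', hgf'⟩
        by_cases hfM₂ : f' ∈ M₂
        · exact hM.2 _ hfM f' hfM₂.1.1 (fun h => hfM₂.2 (by simp [← h])) g ⟨hgf, hgf'⟩
        · have := hdiff₃ f' (Or.inl ⟨hf', hfM₂⟩) g hgf'
          omega
      obtain ⟨hM', hnm⟩ := matching_insert hM₃ hcg hbu₃ hgu₃
      refine ⟨insert s(b, g) M₃, ⟨hM', fun N hN => ?_⟩, ?_⟩
      · rw [Set.ncard_insert_of_notMem hnm (Set.toFinite _)]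
        have := hMmax.2 N hN
        omega
      · rw [Set.mem_insert_iff]
        rintro (h | h)
        · exact hne_e h.symm
        · by_cases hfM₂ : s(b, x) ∈ M₂
          · exact hfM₂.1.2 rfl
          · have := hdiff₃ _ (Or.inl ⟨h, hfM₂⟩) b hbe₀
            rw [SimpleGraph.dist_self] at this
            omega
end

section
/- A finite tree admits at most one tricoloring (B, R, G) satisfying: B, G, and the set of endpoints of edges in R form a partition of the vertex set; the edges in R are pairwise non-adjacent; every edge with one endpoint in G has its other endpoint in B; and every vertex of B has at least two neighbors in G. -/
variable {V : Type*} [Fintype V] [DecidableEq V]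

open SimpleGraph


private lemma concat_isPath' {A : SimpleGraph V} {u v w : V} {p : A.Walk u v}
    (hp : p.IsPath) (h : A.Adj v w) (hw : w ∉ p.support) : (p.concat h).IsPath := by
  rw [← SimpleGraph.Walk.isPath_reverse_iff, SimpleGraph.Walk.reverse_concat]
  exact hp.reverse.cons (by simpa [SimpleGraph.Walk.support_reverse] using hw)

private lemma dist_step {A : SimpleGraph V} (hA : A.IsTree) {u a b c : V} {n : ℕ}
    (hab : A.Adj a b) (hbc : A.Adj b c) (hca : c ≠ a)
    (hda : A.dist u a = n) (hdb : A.dist u b = n + 1) : A.dist u c = n + 2 := by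
  have hconn := hA.isConnected
  have h1 : A.dist b c = 1 := SimpleGraph.dist_eq_one_iff_adj.2 hbc
  have h1' : A.dist c b = 1 := SimpleGraph.dist_eq_one_iff_adj.2 hbc.symm
  have h2 : A.dist u c ≤ n + 2 := by
    have := hconn.dist_triangle (u := u) (v := b) (w := c); omega
  have h0 : n ≤ A.dist u c := by
    have := hconn.dist_triangle (u := u) (v := c) (w := b); omega
  -- helper: b not in support of short paths
  have hnb : ∀ {x : V} (P : A.Walk u x), P.length ≤ n + 1 → x ≠ b → b ∉ P.support := by
    intro x P hPl hxb hmem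
    have h3 : A.dist u b ≤ (P.takeUntil b hmem).length := SimpleGraph.dist_le _
    have h4 := SimpleGraph.Walk.length_takeUntil_le P hmem
    have h6 := congrArg SimpleGraph.Walk.length (P.take_spec hmem)
    rw [SimpleGraph.Walk.length_append] at h6
    have h7 : (P.dropUntil b hmem).length = 0 := by omega
    have g1 := SimpleGraph.Walk.getVert_length (P.dropUntil b hmem)
    rw [h7, SimpleGraph.Walk.getVert_zero] at g1
    exact hxb g1.symm
  rcases Nat.lt_or_ge (A.dist u c) (n + 2) with hlt | hge
  · exfalso
    rcases Nat.lt_or_ge (A.dist u c) (n + 1) with hlt' | hge'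
    · -- dist u c = n : two distinct paths u → b of length n+1
      have hdc : A.dist u c = n := by omega
      obtain ⟨P, hP, hPl⟩ := hconn.exists_path_of_dist u c
      obtain ⟨Q, hQ, hQl⟩ := hconn.exists_path_of_dist u a
      have hbP : b ∉ P.support := hnb P (by omega) hbc.ne'
      have hbQQ : b ∉ Q.support := by
        refine hnb Q (by omega) ?_
        intro h; rw [h] at hda; omega
      have hWP : (P.concat hbc.symm).IsPath := concat_isPath' hP hbc.symm hbP
      have hWQ : (Q.concat hab).IsPath := concat_isPath' hQ hab hbQQ
      have hEq : P.concat hbc.symm = Q.concat hab :=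
        (hA.existsUnique_path u b).unique hWP hWQ
      have hrev := congrArg SimpleGraph.Walk.reverse hEq
      rw [SimpleGraph.Walk.reverse_concat, SimpleGraph.Walk.reverse_concat] at hrev
      have h9 := congrArg (fun w => SimpleGraph.Walk.getVert w 1) hrev
      simp only [SimpleGraph.Walk.getVert_cons_succ, SimpleGraph.Walk.getVert_zero] at h9
      exact hca h9
    · -- dist u c = n+1 : paths of length n+1 and n+2 from u to b
      have hdc : A.dist u c = n + 1 := by omega
      obtain ⟨P, hP, hPl⟩ := hconn.exists_path_of_dist u c
      obtain ⟨Q, hQ, hQl⟩ := hconn.exists_path_of_dist u b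
      have hbP : b ∉ P.support := hnb P (by omega) hbc.ne'
      have hWP : (P.concat hbc.symm).IsPath := concat_isPath' hP hbc.symm hbP
      have hEq : P.concat hbc.symm = Q :=
        (hA.existsUnique_path u b).unique hWP hQ
      have := congrArg SimpleGraph.Walk.length hEq
      rw [SimpleGraph.Walk.length_concat] at this
      omega
  · omega

private lemma tree_no_walk {A : SimpleGraph V} (hA : A.IsTree) (f : ℕ → V)
    (hadj : ∀ n, A.Adj (f n) (f (n + 1))) (hnb : ∀ n, f (n + 2) ≠ f n) : False := by
  have key : ∀ n, A.dist (f 0) (f n) = n ∧ A.dist (f 0) (f (n + 1)) = n + 1 := by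
    intro n
    induction n with
    | zero =>
      exact ⟨SimpleGraph.dist_self, SimpleGraph.dist_eq_one_iff_adj.2 (hadj 0)⟩
    | succ n ih =>
      exact ⟨ih.2, dist_step hA (hadj n) (hadj (n + 1)) (hnb n) ih.1 ih.2⟩
  obtain ⟨m, k, hmk, hf⟩ := Finite.exists_ne_map_eq_of_infinite f
  apply hmk
  have h1 := (key m).1
  have h2 := (key k).1
  rw [hf] at h1
  omega

private lemma no_chain {A : SimpleGraph V} (hA : A.IsTree) (Inv : V → V → Prop)
    (hadj : ∀ p v, Inv p v → A.Adj p v)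
    (hstep : ∀ p v, Inv p v → ∃ w, Inv v w ∧ w ≠ p)
    {p0 v0 : V} (h0 : Inv p0 v0) : False := by
  let T := {x : V × V // Inv x.1 x.2}
  let nxt : T → T := fun x => ⟨(x.1.2, (hstep x.1.1 x.1.2 x.2).choose),
    (hstep x.1.1 x.1.2 x.2).choose_spec.1⟩
  let g : ℕ → T := fun n => nxt^[n] ⟨(p0, v0), h0⟩
  have hg : ∀ n, g (n + 1) = nxt (g n) := fun n => Function.iterate_succ_apply' _ _ _
  let f : ℕ → V := fun n => (g n).1.1
  have hfs : ∀ n, f (n + 1) = (g n).1.2 := by intro n; show (g (n+1)).1.1 = _; rw [hg]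
  refine tree_no_walk hA f (fun n => ?_) (fun n => ?_)
  · rw [hfs]; exact hadj _ _ (g n).2
  · have h := (hstep (g n).1.1 (g n).1.2 (g n).2).choose_spec.2
    have e1 : f (n + 2) = (g (n + 1)).1.2 := hfs (n + 1)
    intro heq
    apply h
    calc (hstep (g n).1.1 (g n).1.2 (g n).2).choose
        = ((g (n+1) : V × V)).2 := by rw [hg]
      _ = f (n + 2) := e1.symm
      _ = f n := heq
      _ = (g n).1.1 := rfl

private lemma tri_lemma {B G : Set V} {R : Set (Sym2 V)}
    (huniv : B ∪ G ∪ Rsupp R = Set.univ) (v : V) : v ∈ B ∨ v ∈ G ∨ v ∈ Rsupp R := by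
  have : v ∈ B ∪ G ∪ Rsupp R := huniv ▸ Set.mem_univ v
  simpa [Set.mem_union, or_assoc] using this

private lemma nbr_lemma {A : SimpleGraph V} {B G : Set V}
    (hdeg : ∀ b ∈ B, 2 ≤ (A.neighborSet b ∩ G).ncard) {b : V} (hb : b ∈ B) (p : V) :
    ∃ g, A.Adj b g ∧ g ∈ G ∧ g ≠ p := by
  have h2 := hdeg b hb
  obtain ⟨g, hg, hne⟩ :=
    Set.exists_ne_of_one_lt_ncard (s := A.neighborSet b ∩ G) (by omega) p
  exact ⟨g, hg.1, hg.2, hne⟩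

private lemma partner_lemma {R : Set (Sym2 V)}
    (hM : ∀ e ∈ R, ∀ f ∈ R, e ≠ f → ∀ v : V, ¬(v ∈ e ∧ v ∈ f)) {v : V}
    (hv : v ∈ Rsupp R) : ∃ w, s(v, w) ∈ R ∧ ∀ x, s(v, x) ∈ R → x = w := by
  obtain ⟨e, heR, hve⟩ := hv
  obtain ⟨w, rfl⟩ := Sym2.mem_iff_exists.1 hve
  refine ⟨w, heR, fun x hx => ?_⟩
  by_contra hxw
  have hne : s(v, x) ≠ s(v, w) := fun h => hxw (Sym2.congr_right.1 h)
  exact hM _ hx _ heR hne v ⟨Sym2.mem_mk_left v x, Sym2.mem_mk_left v w⟩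

/-- chain state -/
private def StInv (B G B' G' : Set V) (R' : Set (Sym2 V)) (p v : V) : Prop :=
  (v ∈ B ∧ v ∈ G') ∨ (v ∈ G ∧ v ∈ Rsupp R' ∧ s(v, p) ∉ R') ∨
    (v ∈ B ∧ v ∈ Rsupp R' ∧ s(v, p) ∈ R')

private lemma st_step {A : SimpleGraph V} {B₁ B₂ G₁ G₂ : Set V} {R₁ R₂ : Set (Sym2 V)}
    (h₁ : IsBColoring A B₁ R₁ G₁) (h₂ : IsBColoring A B₂ R₂ G₂) {p v : V}
    (hadj : A.Adj p v) (hst : StInv B₁ G₁ B₂ G₂ R₂ p v) :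
    ∃ w, A.Adj v w ∧ w ≠ p ∧
      (StInv B₁ G₁ B₂ G₂ R₂ v w ∨ StInv B₂ G₂ B₁ G₁ R₁ v w) := by
  obtain ⟨hR1, huniv1, hBG1, hBD1, hGD1, hM1, hGBr1, hdeg1⟩ := h₁
  obtain ⟨hR2, huniv2, hBG2, hBD2, hGD2, hM2, hGBr2, hdeg2⟩ := h₂
  rcases hst with ⟨hvB1, hvG2⟩ | ⟨hvG1, hvD2, hep⟩ | ⟨hvB1, hvD2, hep⟩
  · obtain ⟨g, hag, hgG1, hgp⟩ := nbr_lemma hdeg1 hvB1 p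
    have hgB2 : g ∈ B₂ := hGBr2 v g hag hvG2
    exact ⟨g, hag, hgp, Or.inr (Or.inl ⟨hgB2, hgG1⟩)⟩
  · obtain ⟨w, hwR, _⟩ := partner_lemma hM2 hvD2
    have haw : A.Adj v w := (A.mem_edgeSet).1 (hR2 hwR)
    have hwp : w ≠ p := fun h => hep (h ▸ hwR)
    have hwB1 : w ∈ B₁ := hGBr1 v w haw hvG1
    have hwD2 : w ∈ Rsupp R₂ := ⟨_, hwR, Sym2.mem_mk_right v w⟩
    refine ⟨w, haw, hwp, Or.inl (Or.inr (Or.inr ⟨hwB1, hwD2, ?_⟩))⟩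
    rwa [Sym2.eq_swap]
  · obtain ⟨g, hag, hgG1, hgp⟩ := nbr_lemma hdeg1 hvB1 p
    rcases tri_lemma huniv2 g with hgB2 | hgG2 | hgD2
    · exact ⟨g, hag, hgp, Or.inr (Or.inl ⟨hgB2, hgG1⟩)⟩
    · exact absurd (hGBr2 g v hag.symm hgG2) (fun h => Set.disjoint_left.1 hBD2 h hvD2)
    · refine ⟨g, hag, hgp, Or.inl (Or.inr (Or.inl ⟨hgG1, hgD2, ?_⟩))⟩
      intro hmem
      rcases eq_or_ne (s(g, v)) (s(v, p)) with heq | hne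
      · rcases Sym2.eq_iff.1 heq with ⟨h1, h2⟩ | ⟨h1, h2⟩
        · exact hag.ne' h1
        · exact hgp h1
      · exact hM2 _ hmem _ hep hne v ⟨Sym2.mem_mk_right g v, Sym2.mem_mk_left v p⟩

private lemma classes_eq {A : SimpleGraph V} (hA : A.IsTree)
    {B₁ B₂ G₁ G₂ : Set V} {R₁ R₂ : Set (Sym2 V)}
    (h₁ : IsBColoring A B₁ R₁ G₁) (h₂ : IsBColoring A B₂ R₂ G₂) :
    B₁ = B₂ ∧ G₁ = G₂ := by
  have hR1 := h₁.1
  have huniv1 := h₁.2.1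
  have hBG1 := h₁.2.2.1
  have hBD1 := h₁.2.2.2.1
  have hGD1 := h₁.2.2.2.2.1
  have hM1 := h₁.2.2.2.2.2.1
  have hGBr1 := h₁.2.2.2.2.2.2.1
  have hdeg1 := h₁.2.2.2.2.2.2.2
  have hR2 := h₂.1
  have huniv2 := h₂.2.1
  have hBG2 := h₂.2.2.1
  have hBD2 := h₂.2.2.2.1
  have hGD2 := h₂.2.2.2.2.1
  have hM2 := h₂.2.2.2.2.2.1
  have hGBr2 := h₂.2.2.2.2.2.2.1
  have hdeg2 := h₂.2.2.2.2.2.2.2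
  have noch : ∀ p w : V, A.Adj p w →
      (StInv B₁ G₁ B₂ G₂ R₂ p w ∨ StInv B₂ G₂ B₁ G₁ R₁ p w) → False := by
    intro p w hpw hst
    refine no_chain hA
      (fun p v => A.Adj p v ∧ (StInv B₁ G₁ B₂ G₂ R₂ p v ∨ StInv B₂ G₂ B₁ G₁ R₁ p v))
      (fun _ _ h => h.1) ?_ ⟨hpw, hst⟩
    rintro p v ⟨hadj, hst | hst⟩
    · obtain ⟨w, ha, hne, hd⟩ := st_step h₁ h₂ hadj hst
      exact ⟨w, ⟨ha, hd⟩, hne⟩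
    · obtain ⟨w, ha, hne, hd⟩ := st_step h₂ h₁ hadj hst
      exact ⟨w, ⟨ha, hd.symm⟩, hne⟩
  have key : ∀ v, (v ∈ B₁ ↔ v ∈ B₂) ∧ (v ∈ G₁ ↔ v ∈ G₂) := by
    intro v
    by_contra hne
    rcases tri_lemma huniv1 v with hB1 | hG1 | hD1 <;>
      rcases tri_lemma huniv2 v with hB2 | hG2 | hD2
    · exact hne ⟨iff_of_true hB1 hB2,
        iff_of_false (fun h => Set.disjoint_left.1 hBG1 hB1 h)
          (fun h => Set.disjoint_left.1 hBG2 hB2 h)⟩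
    · -- v ∈ B₁, v ∈ G₂
      obtain ⟨g, hag, hgG1, _⟩ := nbr_lemma hdeg1 hB1 v
      exact noch g v hag.symm (Or.inl (Or.inl ⟨hB1, hG2⟩))
    · -- v ∈ B₁, v ∈ Rsupp R₂
      obtain ⟨w, hwR, _⟩ := partner_lemma hM2 hD2
      have haw : A.Adj v w := (A.mem_edgeSet).1 (hR2 hwR)
      exact noch w v haw.symm (Or.inl (Or.inr (Or.inr ⟨hB1, hD2, hwR⟩)))
    · -- v ∈ G₁, v ∈ B₂
      obtain ⟨g, hag, hgG2, _⟩ := nbr_lemma hdeg2 hB2 v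
      exact noch g v hag.symm (Or.inr (Or.inl ⟨hB2, hG1⟩))
    · exact hne ⟨iff_of_false (fun h => Set.disjoint_left.1 hBG1 h hG1)
        (fun h => Set.disjoint_left.1 hBG2 h hG2), iff_of_true hG1 hG2⟩
    · -- v ∈ G₁, v ∈ Rsupp R₂ : move to partner w
      obtain ⟨w, hwR, _⟩ := partner_lemma hM2 hD2
      have haw : A.Adj v w := (A.mem_edgeSet).1 (hR2 hwR)
      have hwB1 : w ∈ B₁ := hGBr1 v w haw hG1
      have hwD2 : w ∈ Rsupp R₂ := ⟨_, hwR, Sym2.mem_mk_right v w⟩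
      refine noch v w haw (Or.inl (Or.inr (Or.inr ⟨hwB1, hwD2, ?_⟩)))
      rwa [Sym2.eq_swap]
    · -- v ∈ Rsupp R₁, v ∈ B₂
      obtain ⟨w, hwR, _⟩ := partner_lemma hM1 hD1
      have haw : A.Adj v w := (A.mem_edgeSet).1 (hR1 hwR)
      exact noch w v haw.symm (Or.inr (Or.inr (Or.inr ⟨hB2, hD1, hwR⟩)))
    · -- v ∈ Rsupp R₁, v ∈ G₂
      obtain ⟨w, hwR, _⟩ := partner_lemma hM1 hD1
      have haw : A.Adj v w := (A.mem_edgeSet).1 (hR1 hwR)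
      have hwB2 : w ∈ B₂ := hGBr2 v w haw hG2
      have hwD1 : w ∈ Rsupp R₁ := ⟨_, hwR, Sym2.mem_mk_right v w⟩
      refine noch v w haw (Or.inr (Or.inr (Or.inr ⟨hwB2, hwD1, ?_⟩)))
      rwa [Sym2.eq_swap]
    · exact hne ⟨iff_of_false (fun h => Set.disjoint_left.1 hBD1 h hD1)
          (fun h => Set.disjoint_left.1 hBD2 h hD2),
        iff_of_false (fun h => Set.disjoint_left.1 hGD1 h hD1)
          (fun h => Set.disjoint_left.1 hGD2 h hD2)⟩
  exact ⟨Set.ext fun v => (key v).1, Set.ext fun v => (key v).2⟩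

private lemma match_step {A : SimpleGraph V} {R S : Set (Sym2 V)}
    (hSe : S ⊆ A.edgeSet)
    (hMR : ∀ e ∈ R, ∀ f ∈ R, e ≠ f → ∀ v : V, ¬(v ∈ e ∧ v ∈ f))
    (hMS : ∀ e ∈ S, ∀ f ∈ S, e ≠ f → ∀ v : V, ¬(v ∈ e ∧ v ∈ f))
    (hs : Rsupp R ⊆ Rsupp S) {p q : V} (h : s(p, q) ∈ R) (h2 : s(p, q) ∉ S) :
    ∃ w, A.Adj q w ∧ w ≠ p ∧ s(q, w) ∈ S ∧ s(q, w) ∉ R := by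
  have hq : q ∈ Rsupp S := hs ⟨_, h, Sym2.mem_mk_right p q⟩
  obtain ⟨w, hwS, _⟩ := partner_lemma hMS hq
  have hadj : A.Adj q w := (A.mem_edgeSet).1 (hSe hwS)
  have hwp : w ≠ p := by rintro rfl; rw [Sym2.eq_swap] at hwS; exact h2 hwS
  refine ⟨w, hadj, hwp, hwS, fun hwR => ?_⟩
  have hne : s(q, w) ≠ s(p, q) := by
    intro hh
    rcases Sym2.eq_iff.1 hh with ⟨h1, h2'⟩ | ⟨h1, h2'⟩
    · exact hwp (h2'.trans h1)
    · exact hwp h2'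
  exact hMR _ hwR _ h hne q ⟨Sym2.mem_mk_left q w, Sym2.mem_mk_right p q⟩

private lemma match_sub {A : SimpleGraph V} (hA : A.IsTree) {R₁ R₂ : Set (Sym2 V)}
    (hR1 : R₁ ⊆ A.edgeSet) (hR2 : R₂ ⊆ A.edgeSet)
    (hM1 : ∀ e ∈ R₁, ∀ f ∈ R₁, e ≠ f → ∀ v : V, ¬(v ∈ e ∧ v ∈ f))
    (hM2 : ∀ e ∈ R₂, ∀ f ∈ R₂, e ≠ f → ∀ v : V, ¬(v ∈ e ∧ v ∈ f))
    (hs : Rsupp R₁ = Rsupp R₂) : R₁ ⊆ R₂ := by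
  intro e he
  induction e using Sym2.ind with
  | _ u v =>
    by_contra hne
    refine no_chain hA
      (fun p q => A.Adj p q ∧ ((s(p, q) ∈ R₁ ∧ s(p, q) ∉ R₂) ∨ (s(p, q) ∈ R₂ ∧ s(p, q) ∉ R₁)))
      (fun _ _ h => h.1) ?_
      (p0 := u) (v0 := v) ⟨(A.mem_edgeSet).1 (hR1 he), Or.inl ⟨he, hne⟩⟩
    rintro p q ⟨hadj, ⟨hin, hout⟩ | ⟨hin, hout⟩⟩
    · obtain ⟨w, ha, hwp, h3, h4⟩ := match_step hR2 hM1 hM2 hs.le hin hout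
      exact ⟨w, ⟨ha, Or.inr ⟨h3, h4⟩⟩, hwp⟩
    · obtain ⟨w, ha, hwp, h3, h4⟩ := match_step hR1 hM2 hM1 hs.ge hin hout
      exact ⟨w, ⟨ha, Or.inl ⟨h3, h4⟩⟩, hwp⟩

theorem bColoring_unique (A : SimpleGraph V) (hA : A.IsTree)
    (B₁ B₂ : Set V) (R₁ R₂ : Set (Sym2 V)) (G₁ G₂ : Set V)
    (h₁ : IsBColoring A B₁ R₁ G₁) (h₂ : IsBColoring A B₂ R₂ G₂) :
    B₁ = B₂ ∧ R₁ = R₂ ∧ G₁ = G₂ := by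
  obtain ⟨hB, hG⟩ := classes_eq hA h₁ h₂
  have hD : Rsupp R₁ = Rsupp R₂ := by
    ext v
    constructor
    · intro hv
      rcases tri_lemma h₂.2.1 v with hB2 | hG2 | hD2
      · exact absurd (hB ▸ hB2) (fun h => Set.disjoint_left.1 h₁.2.2.2.1 h hv)
      · exact absurd (hG ▸ hG2) (fun h => Set.disjoint_left.1 h₁.2.2.2.2.1 h hv)
      · exact hD2
    · intro hv
      rcases tri_lemma h₁.2.1 v with hB1 | hG1 | hD1
      · exact absurd (hB ▸ hB1) (fun h => Set.disjoint_left.1 h₂.2.2.2.1 h hv)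
      · exact absurd (hG ▸ hG1) (fun h => Set.disjoint_left.1 h₂.2.2.2.2.1 h hv)
      · exact hD1
  refine ⟨hB, Set.Subset.antisymm ?_ ?_, hG⟩
  · exact match_sub hA h₁.1 h₂.1 h₁.2.2.2.2.2.1 h₂.2.2.2.2.2.1 hD
  · exact match_sub hA h₂.1 h₁.1 h₂.2.2.2.2.2.1 h₁.2.2.2.2.2.1 hD.symm
end

section
/- For a finite tree A with b-coloring (B, R, G), every minimum vertex cover of A contains all vertices of B, no vertex of G, and exactly one endpoint of each edge in R; hence every minimum vertex cover of A has cardinality |B| + |R|. -/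
variable {V : Type*} [Fintype V] [DecidableEq V]

set_option linter.unusedSectionVars false

open SimpleGraph

private lemma walk_mem_support_eq' {A : SimpleGraph V} {r a b : V} (w : A.Walk r a)
    (hb : b ∈ w.support) (hge : w.length ≤ A.dist r b) : b = a := by
  have h1 : A.dist r b ≤ (w.takeUntil b hb).length := SimpleGraph.dist_le _
  have h2 := congrArg SimpleGraph.Walk.length (w.take_spec hb)
  rw [SimpleGraph.Walk.length_append] at h2
  exact SimpleGraph.Walk.eq_of_length_eq_zero (by omega : (w.dropUntil b hb).length = 0)

private lemma concat_isPath'_s9 {A : SimpleGraph V} {r a b : V} {w : A.Walk r a}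
    (hw : w.IsPath) (hab : A.Adj a b) (hb : b ∉ w.support) : (w.concat hab).IsPath := by
  rw [SimpleGraph.Walk.isPath_def, SimpleGraph.Walk.support_concat]
  simp only [List.concat_eq_append, List.nodup_append, List.nodup_cons, List.nodup_nil,
    List.mem_singleton, and_true, List.disjoint_singleton]
  exact ⟨hw.support_nodup, by simpa using (fun x hx hxb => hb (hxb ▸ hx) : ∀ x ∈ w.support, ¬x = b)⟩

private lemma adj_dist_ne' {A : SimpleGraph V} (hA : A.IsTree) (r : V) {a b : V}
    (hab : A.Adj a b) : A.dist r a ≠ A.dist r b := by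
  intro h
  obtain ⟨pa, hpa, hla⟩ := hA.isConnected.exists_path_of_dist r a
  obtain ⟨pb, hpb, hlb⟩ := hA.isConnected.exists_path_of_dist r b
  have hbs : b ∉ pa.support := fun hb =>
    hab.ne' (walk_mem_support_eq' pa hb (by omega))
  have hpath : (pa.concat hab).IsPath := concat_isPath'_s9 hpa hab hbs
  have key := hA.IsAcyclic.path_unique ⟨pa.concat hab, hpath⟩ ⟨pb, hpb⟩
  have hkey : pa.concat hab = pb := congrArg Subtype.val key
  have := congrArg SimpleGraph.Walk.length hkey
  rw [SimpleGraph.Walk.length_concat] at this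
  omega

private lemma parent_unique' {A : SimpleGraph V} (hA : A.IsTree) (r : V) {a p b : V}
    (hab : A.Adj a b) (hpb : A.Adj p b)
    (ha : A.dist r a + 1 = A.dist r b) (hp : A.dist r p + 1 = A.dist r b) : a = p := by
  obtain ⟨pa, hpa, hla⟩ := hA.isConnected.exists_path_of_dist r a
  obtain ⟨pp, hpp, hlp⟩ := hA.isConnected.exists_path_of_dist r p
  have hbs : b ∉ pa.support := by
    intro hb
    have h1 : A.dist r b ≤ (pa.takeUntil b hb).length := SimpleGraph.dist_le _
    have h2 := SimpleGraph.Walk.length_takeUntil_le pa hb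
    omega
  have hbs' : b ∉ pp.support := by
    intro hb
    have h1 : A.dist r b ≤ (pp.takeUntil b hb).length := SimpleGraph.dist_le _
    have h2 := SimpleGraph.Walk.length_takeUntil_le pp hb
    omega
  have key := hA.IsAcyclic.path_unique ⟨pa.concat hab, concat_isPath'_s9 hpa hab hbs⟩
    ⟨pp.concat hpb, concat_isPath'_s9 hpp hpb hbs'⟩
  have hkey : pa.concat hab = pp.concat hpb := congrArg Subtype.val key
  obtain ⟨hv, -⟩ := SimpleGraph.Walk.concat_inj hkey
  exact hv

private lemma adj_dist_cases' {A : SimpleGraph V} (hA : A.IsTree) (r : V) {a b : V}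
    (hab : A.Adj a b) :
    A.dist r b = A.dist r a + 1 ∨ A.dist r a = A.dist r b + 1 := by
  have hone : A.dist a b = 1 := SimpleGraph.dist_eq_one_iff_adj.mpr hab
  have hone' : A.dist b a = 1 := SimpleGraph.dist_eq_one_iff_adj.mpr hab.symm
  have h1 := hA.isConnected.dist_triangle (u := r) (v := a) (w := b)
  have h2 := hA.isConnected.dist_triangle (u := r) (v := b) (w := a)
  have h3 := adj_dist_ne' hA r hab
  omega

theorem minVC_of_bColoring (A : SimpleGraph V) (hA : A.IsTree)
    (B : Set V) (R : Set (Sym2 V)) (G : Set V) (hBC : IsBColoring A B R G)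
    (C : Set V) (hC : IsMinVC A C) :
    B ⊆ C ∧ Disjoint C G ∧ (∀ e ∈ R, ∃! v : V, v ∈ e ∧ v ∈ C) ∧
    C.ncard = B.ncard + R.ncard := by
  classical
  obtain ⟨hRE, hcover, hBG, hBR, hGR, hRdisj, hGadj, hB2⟩ := hBC
  obtain ⟨hCvc, hCmin⟩ := hC
  have hconn := hA.isConnected
  obtain ⟨r0⟩ : Nonempty V := hconn.nonempty
  have hpart : ∀ v : V, v ∈ B ∨ v ∈ G ∨ v ∈ Rsupp R := by
    intro v
    have hv : v ∈ B ∪ G ∪ Rsupp R := by rw [hcover]; trivial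
    rcases hv with (h | h) | h <;> tauto
  -- closer-endpoint selector for the VC0 construction
  have hclEx : ∀ e ∈ R, ∃ v, v ∈ e ∧ ∀ w ∈ e, w ≠ v → A.dist r0 v < A.dist r0 w := by
    intro e
    induction e using Sym2.ind with
    | _ x y =>
      intro he
      have hadj : A.Adj x y := (SimpleGraph.mem_edgeSet A).1 (hRE he)
      rcases adj_dist_cases' hA r0 hadj with h | h
      · refine ⟨x, Sym2.mem_mk_left x y, ?_⟩
        intro w hw hne
        rcases Sym2.mem_iff.1 hw with rfl | rfl
        · exact absurd rfl hne
        · omega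
      · refine ⟨y, Sym2.mem_mk_right x y, ?_⟩
        intro w hw hne
        rcases Sym2.mem_iff.1 hw with rfl | rfl
        · omega
        · exact absurd rfl hne
  let cl : Sym2 V → V := fun e =>
    if h : ∃ v, v ∈ e ∧ ∀ w ∈ e, w ≠ v → A.dist r0 v < A.dist r0 w then h.choose else r0
  have hcl : ∀ e ∈ R, cl e ∈ e ∧ ∀ w ∈ e, w ≠ cl e → A.dist r0 (cl e) < A.dist r0 w := by
    intro e he
    have h := hclEx e he
    simp only [cl, dif_pos h]
    exact h.choose_spec
  -- VC0 = B ∪ cl '' R is a vertex cover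
  have hVC0 : IsVC A (B ∪ cl '' R) := by
    intro e
    induction e using Sym2.ind with
    | _ x y =>
      intro he
      have hadj : A.Adj x y := (SimpleGraph.mem_edgeSet A).1 he
      by_cases hxB : x ∈ B
      · exact ⟨x, Or.inl hxB, Sym2.mem_mk_left x y⟩
      by_cases hyB : y ∈ B
      · exact ⟨y, Or.inl hyB, Sym2.mem_mk_right x y⟩
      have hxG : x ∉ G := fun h => hyB (hGadj x y hadj h)
      have hyG : y ∉ G := fun h => hxB (hGadj y x hadj.symm h)
      obtain ⟨e1, he1, hxe1⟩ : x ∈ Rsupp R := by rcases hpart x with h | h | h <;> tauto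
      obtain ⟨e2, he2, hye2⟩ : y ∈ Rsupp R := by rcases hpart y with h | h | h <;> tauto
      by_cases hx : cl e1 = x
      · exact ⟨x, Or.inr ⟨e1, he1, hx⟩, Sym2.mem_mk_left x y⟩
      by_cases hy : cl e2 = y
      · exact ⟨y, Or.inr ⟨e2, he2, hy⟩, Sym2.mem_mk_right x y⟩
      exfalso
      -- partners
      have hp1 := Sym2.other_spec hxe1
      set p := Sym2.Mem.other hxe1 with hpdef
      have hadj1 : A.Adj x p := (SimpleGraph.mem_edgeSet A).1 (by rw [hp1]; exact hRE he1)
      have hq1 := Sym2.other_spec hye2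
      set q := Sym2.Mem.other hye2 with hqdef
      have hadj2 : A.Adj y q := (SimpleGraph.mem_edgeSet A).1 (by rw [hq1]; exact hRE he2)
      have h12 : e1 ≠ e2 := by
        rintro rfl
        have hyp : y = p := by
          rcases Sym2.mem_iff.1 (show y ∈ s(x, p) by rw [hp1]; exact hye2) with h | h
          · exact absurd h.symm hadj.ne
          · exact h
        have hexy : s(x, y) = e1 := by rw [← hp1, hyp]
        rcases Sym2.mem_iff.1 (show cl e1 ∈ s(x, y) by rw [hexy]; exact (hcl e1 he1).1)
          with h | h
        · exact hx h
        · exact hy h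
      -- cl e1 = p, cl e2 = q
      have hclp : cl e1 = p := by
        rcases Sym2.mem_iff.1 (show cl e1 ∈ s(x, p) by rw [hp1]; exact (hcl e1 he1).1) with h | h
        · exact absurd h hx
        · exact h
      have hclq : cl e2 = q := by
        rcases Sym2.mem_iff.1 (show cl e2 ∈ s(y, q) by rw [hq1]; exact (hcl e2 he2).1) with h | h
        · exact absurd h hy
        · exact h
      have hdp : A.dist r0 (cl e1) < A.dist r0 x := (hcl e1 he1).2 x hxe1 (Ne.symm hx)
      have hdq : A.dist r0 (cl e2) < A.dist r0 y := (hcl e2 he2).2 y hye2 (Ne.symm hy)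
      rw [hclp] at hdp
      rw [hclq] at hdq
      have hdp' : A.dist r0 p + 1 = A.dist r0 x := by
        rcases adj_dist_cases' hA r0 hadj1 with h | h <;> omega
      have hdq' : A.dist r0 q + 1 = A.dist r0 y := by
        rcases adj_dist_cases' hA r0 hadj2 with h | h <;> omega
      rcases adj_dist_cases' hA r0 hadj with h | h
      · -- dist y = dist x + 1 ; x and q are parents of y
        have hxq : x = q := parent_unique' hA r0 hadj hadj2.symm (by omega) (by omega)
        refine hRdisj e1 he1 e2 he2 h12 x ⟨hxe1, ?_⟩
        rw [hxq]; exact Sym2.other_mem hye2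
      · have hyp : y = p := parent_unique' hA r0 hadj.symm hadj1.symm (by omega) (by omega)
        refine hRdisj e1 he1 e2 he2 h12 y ⟨?_, hye2⟩
        rw [hyp]; exact Sym2.other_mem hxe1
  -- size of VC0
  have hCle : C.ncard ≤ B.ncard + R.ncard := by
    have h1 := hCmin _ hVC0
    have h2 := Set.ncard_union_le B (cl '' R)
    have h3 := Set.ncard_image_le (f := cl) (s := R) (Set.toFinite R)
    omega
  -- swap step : |C ∩ G| ≤ |B \ C|
  have hswap : (C ∩ G).ncard ≤ (B \ C).ncard := by
    have hVC' : IsVC A ((C \ G) ∪ B) := by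
      intro e
      induction e using Sym2.ind with
      | _ x y =>
        intro he
        have hadj : A.Adj x y := (SimpleGraph.mem_edgeSet A).1 he
        obtain ⟨v, hvC, hv⟩ := hCvc _ he
        by_cases hvG : v ∈ G
        · rcases Sym2.mem_iff.1 hv with rfl | rfl
          · exact ⟨y, Or.inr (hGadj v y hadj hvG), Sym2.mem_mk_right v y⟩
          · exact ⟨x, Or.inr (hGadj v x hadj.symm hvG), Sym2.mem_mk_left x v⟩
        · exact ⟨v, Or.inl ⟨hvC, hvG⟩, hv⟩
    have h1 := hCmin _ hVC'
    have hBG' : ∀ v, v ∈ B → v ∉ G := fun v hv hg => Set.disjoint_left.mp hBG hv hg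
    have heq : (C \ G) ∪ B = (C \ G) ∪ (B \ C) := by
      ext v
      simp only [Set.mem_union, Set.mem_diff]
      have := hBG' v
      tauto
    have hdisj : Disjoint (C \ G) (B \ C) := by
      rw [Set.disjoint_left]
      rintro v ⟨hvC, _⟩ ⟨_, hvC'⟩
      exact hvC' hvC
    have h2 : ((C \ G) ∪ (B \ C)).ncard = (C \ G).ncard + (B \ C).ncard :=
      Set.ncard_union_eq hdisj (Set.toFinite _) (Set.toFinite _)
    have h3 : (C \ G).ncard + (C ∩ G).ncard = C.ncard := by
      rw [← Set.ncard_union_eq (Set.disjoint_of_subset_right Set.inter_subset_right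
        Set.disjoint_sdiff_left) (Set.toFinite _) (Set.toFinite _), Set.diff_union_inter]
    rw [heq] at h1
    omega
  -- B ⊆ C
  have hBsubC : B ⊆ C := by
    by_contra hns
    rw [Set.not_subset] at hns
    obtain ⟨s0, hs0B, hs0C⟩ := hns
    set S := B \ C with hSdef
    set T := C ∩ G with hTdef
    have hS0 : s0 ∈ S := ⟨hs0B, hs0C⟩
    have hnbr : ∀ s ∈ S, (A.neighborSet s ∩ G) ⊆ (A.neighborSet s ∩ T) := by
      rintro s hs w ⟨hw1, hw2⟩
      have hadj : A.Adj s w := hw1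
      obtain ⟨v, hvC, hv⟩ := hCvc _ ((SimpleGraph.mem_edgeSet A).2 hadj)
      refine ⟨hw1, ?_, hw2⟩
      rcases Sym2.mem_iff.1 hv with rfl | rfl
      · exact absurd hvC hs.2
      · exact hvC
    have h2T : ∀ s ∈ S, 2 ≤ (A.neighborSet s ∩ T).ncard := fun s hs =>
      le_trans (hB2 s hs.1) (Set.ncard_le_ncard (hnbr s hs) (Set.toFinite _))
    have hchild : ∀ s ∈ S, ∃ t, t ∈ A.neighborSet s ∩ T ∧ A.dist s0 t = A.dist s0 s + 1 := by
      intro s hs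
      by_contra hno
      push_neg at hno
      have hall : ∀ t ∈ A.neighborSet s ∩ T, A.dist s0 t + 1 = A.dist s0 s := by
        intro t ht
        rcases adj_dist_cases' hA s0 (ht.1 : A.Adj s t) with h | h
        · exact absurd h (hno t ht)
        · omega
      have hss : (A.neighborSet s ∩ T).Subsingleton := by
        intro t1 h1 t2 h2
        exact parent_unique' hA s0 ((h1.1 : A.Adj s t1).symm) ((h2.1 : A.Adj s t2).symm)
          (hall t1 h1) (hall t2 h2)
      have hle1 : (A.neighborSet s ∩ T).ncard ≤ 1 :=
        (Set.ncard_le_one (Set.toFinite _)).2 fun a ha b hb => hss ha hb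
      have := h2T s hs
      omega
    let tf : V → V := fun s =>
      if h : ∃ t, t ∈ A.neighborSet s ∩ T ∧ A.dist s0 t = A.dist s0 s + 1 then h.choose else s0
    have htf : ∀ s ∈ S, tf s ∈ A.neighborSet s ∩ T ∧ A.dist s0 (tf s) = A.dist s0 s + 1 := by
      intro s hs
      have h := hchild s hs
      simp only [tf, dif_pos h]
      exact h.choose_spec
    have hinj : Set.InjOn tf S := by
      intro s1 h1 s2 h2 heq
      have ha1 : A.Adj s1 (tf s1) := (htf s1 h1).1.1
      have ha2 : A.Adj s2 (tf s1) := by rw [heq]; exact (htf s2 h2).1.1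
      exact parent_unique' hA s0 ha1 ha2 (htf s1 h1).2.symm
        (by rw [heq]; exact (htf s2 h2).2.symm)
    -- a second child of s0
    obtain ⟨t1, ht1, t2, ht2, h12⟩ := (Set.one_lt_ncard (Set.toFinite _)).1
      (lt_of_lt_of_le one_lt_two (h2T s0 hS0))
    set t' := if t1 = tf s0 then t2 else t1 with ht'def
    have ht'mem : t' ∈ A.neighborSet s0 ∩ T := by
      rw [ht'def]; split <;> assumption
    have ht'ne : t' ≠ tf s0 := by
      rw [ht'def]; split
      · rename_i h; rw [← h]; exact h12.symm
      · assumption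
    have ht'dist : A.dist s0 t' = 1 :=
      SimpleGraph.dist_eq_one_iff_adj.mpr (ht'mem.1 : A.Adj s0 t')
    have ht'new : t' ∉ tf '' S := by
      rintro ⟨s, hsS, hst⟩
      have hd := (htf s hsS).2
      rw [hst, ht'dist] at hd
      have hs0 : s0 = s := hconn.dist_eq_zero_iff.1 (show A.dist s0 s = 0 by omega)
      rw [← hs0] at hst
      exact ht'ne hst.symm
    have hsubT : insert t' (tf '' S) ⊆ T := by
      intro v hv
      rcases Set.mem_insert_iff.1 hv with rfl | ⟨s, hsS, rfl⟩
      · exact ht'mem.2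
      · exact (htf s hsS).1.2
    have hcount := Set.ncard_le_ncard hsubT (Set.toFinite _)
    rw [Set.ncard_insert_of_notMem ht'new (Set.toFinite _),
      Set.ncard_image_of_injOn hinj] at hcount
    omega
  -- C ∩ G = ∅
  have hBC0 : (B \ C).ncard = 0 := by
    rw [Set.diff_eq_empty.2 hBsubC, Set.ncard_empty]
  have hCGempty : C ∩ G = ∅ := (Set.ncard_eq_zero (Set.toFinite _)).1 (by omega)
  have hCG : Disjoint C G := Set.disjoint_iff_inter_eq_empty.2 hCGempty
  -- selector of a C-endpoint of each R-edge
  let g : Sym2 V → V := fun e => if h : ∃ v, v ∈ e ∧ v ∈ C then h.choose else r0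
  have hg : ∀ e ∈ R, g e ∈ e ∧ g e ∈ C := by
    intro e he
    obtain ⟨v, hvC, hv⟩ := hCvc e (hRE he)
    have h : ∃ v, v ∈ e ∧ v ∈ C := ⟨v, hv, hvC⟩
    simp only [g, dif_pos h]
    exact h.choose_spec
  have hginj : Set.InjOn g R := by
    intro e1 h1 e2 h2 heq
    by_contra hne
    exact hRdisj e1 h1 e2 h2 hne (g e1) ⟨(hg e1 h1).1, heq ▸ (hg e2 h2).1⟩
  have hBgdisj : Disjoint B (g '' R) := by
    rw [Set.disjoint_right]
    rintro v ⟨e, he, rfl⟩ hvB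
    exact Set.disjoint_left.mp hBR hvB ⟨e, he, (hg e he).1⟩
  have hsub2 : B ∪ g '' R ⊆ C := by
    intro v hv
    rcases hv with hv | ⟨e, he, rfl⟩
    · exact hBsubC hv
    · exact (hg e he).2
  have hUcard : (B ∪ g '' R).ncard = B.ncard + R.ncard := by
    rw [Set.ncard_union_eq hBgdisj (Set.toFinite _) (Set.toFinite _),
      Set.ncard_image_of_injOn hginj]
  have hge : B.ncard + R.ncard ≤ C.ncard := by
    have := Set.ncard_le_ncard hsub2 (Set.toFinite _)
    omega
  have hCcard : C.ncard = B.ncard + R.ncard := le_antisymm hCle hge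
  refine ⟨hBsubC, hCG, ?_, hCcard⟩
  intro e he
  refine ⟨g e, ⟨(hg e he).1, (hg e he).2⟩, ?_⟩
  rintro y ⟨hye, hyC⟩
  by_contra hne
  have hyR : y ∈ Rsupp R := ⟨e, he, hye⟩
  have hynB : y ∉ B := fun h => Set.disjoint_left.mp hBR h hyR
  have hyng : y ∉ g '' R := by
    rintro ⟨e', he', hey⟩
    by_cases h12 : e' = e
    · rw [h12] at hey; exact hne hey.symm
    · exact hRdisj e' he' e he h12 y ⟨hey ▸ (hg e' he').1, hye⟩
  have hsub3 : insert y (B ∪ g '' R) ⊆ C := by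
    intro v hv
    rcases Set.mem_insert_iff.1 hv with rfl | hv
    · exact hyC
    · exact hsub2 hv
  have hcount := Set.ncard_le_ncard hsub3 (Set.toFinite _)
  rw [Set.ncard_insert_of_notMem (by simp [hynB, hyng]) (Set.toFinite _)] at hcount
  omega
end
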